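/- arXiv:2407.19455 — 5 statements merged into one kernel-verified Lean document; each statement's English description precedes it below -/
import Mathlib

section
/- Let X be a reflexive Banach space and Y any Banach space over the same field K (ℝ or ℂ). Let T ∈ L(X,Y) with ‖T‖ = 1, suppose the subspace K(X,Y) of compact operators is an M-ideal in L(X,Y), and dist(T, K(X,Y)) < 1. Suppose {x₁, x₂, …, x_r} is a maximal linearly independent subset of M_T ∩ Ext(B_X) and Txᵢ is mᵢ-smooth for each 1 ≤ i ≤ r. Then the dimension of the linear span of J(T) is at least m₁ + m₂ + … + m_r. -/
open Metric Set
open scoped ENNReal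

noncomputable section

/-- The set `J(x)` of support functionals at `x`: norm-one functionals with `f x = 1`. -/
def suppFunctionals (𝕜 : Type*) [RCLike 𝕜] {X : Type*} [NormedAddCommGroup X]
    [NormedSpace 𝕜 X] (x : X) : Set (StrongDual 𝕜 X) :=
  {f | ‖f‖ = 1 ∧ f x = 1}

/-- `x` is `k`-smooth: the span of its support functionals has dimension `k`. -/
def IsKSmooth (𝕜 : Type*) [RCLike 𝕜] {X : Type*} [NormedAddCommGroup X]
    [NormedSpace 𝕜 X] (x : X) (k : ℕ) : Prop :=
  Module.rank 𝕜 ↥(Submodule.span 𝕜 (suppFunctionals 𝕜 x)) = k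

/-- Extreme points of a set `A` (real convex combinations, scalars embedded in `𝕜`). -/
def ExtremePts (𝕜 : Type*) [RCLike 𝕜] {X : Type*} [NormedAddCommGroup X]
    [NormedSpace 𝕜 X] (A : Set X) : Set X :=
  {z | z ∈ A ∧ ∀ x ∈ A, ∀ y ∈ A, ∀ t : ℝ, 0 < t → t < 1 →
    z = ((1 - t : ℝ) : 𝕜) • x + ((t : ℝ) : 𝕜) • y → x = z ∧ y = z}

/-- A strictly convex space: every unit vector is an extreme point of the closed unit ball. -/
def StrictlyConvexSp (𝕜 : Type*) [RCLike 𝕜] (X : Type*) [NormedAddCommGroup X]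
    [NormedSpace 𝕜 X] : Prop :=
  ∀ x : X, ‖x‖ = 1 → x ∈ ExtremePts 𝕜 (closedBall (0 : X) 1)

/-- A smooth space: every unit vector has a unique support functional. -/
def SmoothSp (𝕜 : Type*) [RCLike 𝕜] (X : Type*) [NormedAddCommGroup X]
    [NormedSpace 𝕜 X] : Prop :=
  ∀ x : X, ‖x‖ = 1 → ∃ f, suppFunctionals 𝕜 x = {f}

/-- Birkhoff–James orthogonality: `x ⊥_B y` iff `‖x + c • y‖ ≥ ‖x‖` for all scalars `c`. -/
def BJOrtho (𝕜 : Type*) [RCLike 𝕜] {X : Type*} [NormedAddCommGroup X]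
    [NormedSpace 𝕜 X] (x y : X) : Prop :=
  ∀ c : 𝕜, ‖x‖ ≤ ‖x + c • y‖

/-- The norm attainment set `M_T` of an operator `T`. -/
def normAttainSet (𝕜 : Type*) [RCLike 𝕜] {X Y : Type*} [NormedAddCommGroup X]
    [NormedSpace 𝕜 X] [NormedAddCommGroup Y] [NormedSpace 𝕜 Y] (T : X →L[𝕜] Y) : Set X :=
  {x | ‖x‖ = 1 ∧ ‖T x‖ = ‖T‖}

/-- `V` is an M-ideal in `Z`: the dual of `Z` splits as an ℓ¹ direct sum of a closed
subspace `S` and the annihilator of `V`. -/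
def IsMIdeal (𝕜 : Type*) [RCLike 𝕜] {Z : Type*} [NormedAddCommGroup Z]
    [NormedSpace 𝕜 Z] (V : Submodule 𝕜 Z) : Prop :=
  IsClosed (V : Set Z) ∧
  ∃ S : Submodule 𝕜 (StrongDual 𝕜 Z), IsClosed (S : Set (StrongDual 𝕜 Z)) ∧
    ∀ f : StrongDual 𝕜 Z,
      (∃! gh : StrongDual 𝕜 Z × StrongDual 𝕜 Z,
        gh.1 ∈ S ∧ (∀ v ∈ V, gh.2 v = 0) ∧ f = gh.1 + gh.2) ∧
      (∀ g h : StrongDual 𝕜 Z, g ∈ S → (∀ v ∈ V, h v = 0) → f = g + h →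
        ‖f‖ = ‖g‖ + ‖h‖)

/-- The subspace of compact operators in `L(X,Y)`. -/
def compactOperators (𝕜 : Type*) [RCLike 𝕜] (X Y : Type*) [NormedAddCommGroup X]
    [NormedSpace 𝕜 X] [NormedAddCommGroup Y] [NormedSpace 𝕜 Y] :
    Submodule 𝕜 (X →L[𝕜] Y) where
  carrier := {T | IsCompactOperator T}
  add_mem' := fun h1 h2 => h1.add h2
  zero_mem' := isCompactOperator_zero
  smul_mem' := fun c _ h => h.smul c

/-- A reflexive space: the canonical embedding into the double dual is surjective. -/
def ReflexiveSp (𝕜 : Type*) [RCLike 𝕜] (X : Type*) [NormedAddCommGroup X]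
    [NormedSpace 𝕜 X] : Prop :=
  Function.Surjective (NormedSpace.inclusionInDoubleDual 𝕜 X)

/-- A coproximinal subspace: every point has a best coapproximation out of `V`. -/
def Coproximinal (𝕜 : Type*) [RCLike 𝕜] {Y : Type*} [NormedAddCommGroup Y]
    [NormedSpace 𝕜 Y] (V : Submodule 𝕜 Y) : Prop :=
  ∀ y : Y, ∃ y₀ ∈ V, ∀ z ∈ V, ‖y₀ - z‖ ≤ ‖y - z‖

/-- The functional `y* ⊗ x` on `L(X,Y)` given by `A ↦ y*(A x)`. -/
def tensorFunctional (𝕜 : Type*) [RCLike 𝕜] {X Y : Type*} [NormedAddCommGroup X]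
    [NormedSpace 𝕜 X] [NormedAddCommGroup Y] [NormedSpace 𝕜 Y]
    (f : StrongDual 𝕜 Y) (x : X) : StrongDual 𝕜 (X →L[𝕜] Y) :=
  f.comp (ContinuousLinearMap.apply 𝕜 Y x)

/-- The set of support functionals of images `Tx` for `x ∈ R ∩ Ext(B_X)`. -/
def suppOfImage (𝕜 : Type*) [RCLike 𝕜] {X Y : Type*} [NormedAddCommGroup X]
    [NormedSpace 𝕜 X] [NormedAddCommGroup Y] [NormedSpace 𝕜 Y]
    (T : X →L[𝕜] Y) (R : Set X) : Set (StrongDual 𝕜 Y) :=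
  {f | ∃ x ∈ R ∩ ExtremePts 𝕜 (closedBall (0 : X) 1), f ∈ suppFunctionals 𝕜 (T x)}

/-- The subspace `Z ⊆ 𝕜^{np}` from the definition of the index of smoothness, relative to
bases `v` of `span R` and `w` of `W`. -/
def indexSubspace (𝕜 : Type*) [RCLike 𝕜] {X Y : Type*} [NormedAddCommGroup X]
    [NormedSpace 𝕜 X] [NormedAddCommGroup Y] [NormedSpace 𝕜 Y]
    (T : X →L[𝕜] Y) (R : Set X) {n p : ℕ} (v : Fin n → X)
    (w : Fin p → StrongDual 𝕜 Y) : Submodule 𝕜 (Fin n × Fin p → 𝕜) :=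
  Submodule.span 𝕜 {z | ∃ (α : Fin n → 𝕜) (β : Fin p → 𝕜),
    (∑ i, α i • v i) ∈ R ∩ ExtremePts 𝕜 (closedBall (0 : X) 1) ∧
    (∑ j, β j • w j) ∈ ExtremePts 𝕜 (suppFunctionals 𝕜 (T (∑ i, α i • v i))) ∧
    z = fun ij => α ij.1 * β ij.2}

/-- `v` is a basis of the span of the set `R`. -/
def IsBasisOfSpan (𝕜 : Type*) [RCLike 𝕜] {E : Type*} [AddCommGroup E] [Module 𝕜 E]
    {n : ℕ} (v : Fin n → E) (R : Set E) : Prop :=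
  LinearIndependent 𝕜 v ∧ Submodule.span 𝕜 (Set.range v) = Submodule.span 𝕜 R

/-- The index of smoothness of `T` with respect to `R` equals `k`: for every choice of bases
of `span R` and of `W`, the corresponding subspace `Z` has dimension `k`. -/
def HasIndexOfSmoothness (𝕜 : Type*) [RCLike 𝕜] {X Y : Type*} [NormedAddCommGroup X]
    [NormedSpace 𝕜 X] [NormedAddCommGroup Y] [NormedSpace 𝕜 Y]
    (T : X →L[𝕜] Y) (R : Set X) (k : ℕ) : Prop :=
  ∀ (n p : ℕ) (v : Fin n → X) (w : Fin p → StrongDual 𝕜 Y),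
    IsBasisOfSpan 𝕜 v R → IsBasisOfSpan 𝕜 w (suppOfImage 𝕜 T R) →
      Module.finrank 𝕜 ↥(indexSubspace 𝕜 T R v w) = k

/-- A polyhedral finite-dimensional real space: the unit ball has finitely many
extreme points. -/
def PolyhedralSp (X : Type*) [NormedAddCommGroup X] [NormedSpace ℝ X] : Prop :=
  (ExtremePts ℝ (closedBall (0 : X) 1)).Finite

/-- A face of the unit ball of a real space. -/
def IsFaceOfBall {X : Type*} [NormedAddCommGroup X] [NormedSpace ℝ X] (F : Set X) : Prop :=
  (∀ x ∈ F, ‖x‖ = 1) ∧ Convex ℝ F ∧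
  ∀ x₁ x₂ : X, ‖x₁‖ = 1 → ‖x₂‖ = 1 → ∀ t : ℝ, 0 < t → t < 1 →
    (1 - t) • x₁ + t • x₂ ∈ F → x₁ ∈ F ∧ x₂ ∈ F

/-- The dimension of a face: the dimension of the span of differences of its elements. -/
def faceDim {X : Type*} [NormedAddCommGroup X] [NormedSpace ℝ X] (F : Set X) : ℕ :=
  Module.finrank ℝ ↥(Submodule.span ℝ {d : X | ∃ v ∈ F, ∃ w ∈ F, d = v - w})

/-- `u` is a strong Auerbach basis of the subspace `V`. -/
def IsStrongAuerbachBasis (𝕜 : Type*) [RCLike 𝕜] {Y : Type*} [NormedAddCommGroup Y]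
    [NormedSpace 𝕜 Y] {d : ℕ} (u : Fin d → Y) (V : Submodule 𝕜 Y) : Prop :=
  (∀ i, u i ∈ V) ∧ (∀ i, ‖u i‖ = 1) ∧ LinearIndependent 𝕜 u ∧
  Submodule.span 𝕜 (Set.range u) = V ∧
  ∀ C : Set (Fin d), ∀ a ∈ Submodule.span 𝕜 (u '' C), ∀ b ∈ Submodule.span 𝕜 (u '' Cᶜ),
    BJOrtho 𝕜 a b

end

set_option maxHeartbeats 1000000 in
set_option synthInstance.maxHeartbeats 200000 in
theorem rank_span_suppFunctionals_ge_sum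
    {𝕜 X Y : Type*} [RCLike 𝕜]
    [NormedAddCommGroup X] [NormedSpace 𝕜 X] [CompleteSpace X]
    [NormedAddCommGroup Y] [NormedSpace 𝕜 Y] [CompleteSpace Y]
    (hXrefl : ReflexiveSp 𝕜 X)
    (T : X →L[𝕜] Y) (hT : ‖T‖ = 1)
    (hMideal : IsMIdeal 𝕜 (compactOperators 𝕜 X Y))
    (hdist : Metric.infDist T (compactOperators 𝕜 X Y : Set (X →L[𝕜] Y)) < 1)
    {r : ℕ} (x : Fin r → X)
    (hmem : ∀ i, x i ∈ normAttainSet 𝕜 T ∩ ExtremePts 𝕜 (closedBall (0 : X) 1))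
    (hind : LinearIndependent 𝕜 x)
    (hmax : ∀ z ∈ normAttainSet 𝕜 T ∩ ExtremePts 𝕜 (closedBall (0 : X) 1),
      z ∈ Submodule.span 𝕜 (Set.range x))
    (m : Fin r → ℕ) (hsm : ∀ i, IsKSmooth 𝕜 (T (x i)) (m i)) :
    ((∑ i, m i : ℕ) : Cardinal) ≤
      Module.rank 𝕜 ↥(Submodule.span 𝕜 (suppFunctionals 𝕜 T)) := by
  classical
  -- notation
  set JT : Submodule 𝕜 (StrongDual 𝕜 (X →L[𝕜] Y)) :=
    Submodule.span 𝕜 (suppFunctionals 𝕜 T) with hJT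
  -- each span J(T xᵢ) is finite dimensional of finrank mᵢ
  have hfd : ∀ i, FiniteDimensional 𝕜
      ↥(Submodule.span 𝕜 (suppFunctionals 𝕜 (T (x i)))) := fun i =>
    haveI : Module.Free 𝕜 ↥(Submodule.span 𝕜 (suppFunctionals 𝕜 (T (x i)))) :=
      @Module.Free.of_divisionRing 𝕜 _ _ (Submodule.addCommGroup _) _
    Module.finite_of_rank_eq_nat (hsm i)
  have hfr : ∀ i, Module.finrank 𝕜
      ↥(Submodule.span 𝕜 (suppFunctionals 𝕜 (T (x i)))) = m i := fun i =>
    Module.finrank_eq_of_rank_eq (hsm i)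
  let b : ∀ i, Module.Basis (Fin (m i)) 𝕜
      ↥(Submodule.span 𝕜 (suppFunctionals 𝕜 (T (x i)))) := fun i =>
    haveI := hfd i
    haveI : Module.Free 𝕜 ↥(Submodule.span 𝕜 (suppFunctionals 𝕜 (T (x i)))) :=
      @Module.Free.of_divisionRing 𝕜 _ _ (Submodule.addCommGroup _) _
    Module.finBasisOfFinrankEq 𝕜 _ (hfr i)
  -- dual family φ i with φ i (x j) = δᵢⱼ
  haveI : FiniteDimensional 𝕜 ↥(Submodule.span 𝕜 (Set.range x)) :=
    FiniteDimensional.span_of_finite 𝕜 (Set.finite_range x)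
  let bx : Module.Basis (Fin r) 𝕜 ↥(Submodule.span 𝕜 (Set.range x)) := Module.Basis.span hind
  have hφex : ∀ i : Fin r, ∃ φ : X →L[𝕜] 𝕜,
      ∀ j, φ (x j) = if i = j then 1 else 0 := by
    intro i
    obtain ⟨g, hg, -⟩ := exists_extension_norm_eq (Submodule.span 𝕜 (Set.range x))
      (LinearMap.toContinuousLinearMap (bx.coord i))
    refine ⟨g, fun j => ?_⟩
    have hxj : x j ∈ Submodule.span 𝕜 (Set.range x) :=
      Submodule.subset_span (Set.mem_range_self j)
    have h1 : (⟨x j, hxj⟩ : ↥(Submodule.span 𝕜 (Set.range x))) = bx j := by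
      apply Subtype.ext
      simp [bx, Module.Basis.span_apply]
    have h2 : g (x j) = (bx.coord i) (bx j) := by
      have h3 : ((⟨x j, hxj⟩ : ↥(Submodule.span 𝕜 (Set.range x))) : X) = x j := rfl
      rw [← h3, h1]
      simpa using hg (bx j)
    rw [h2, Module.Basis.coord_apply, Module.Basis.repr_self]
    by_cases h : i = j
    · subst h; simp
    · simp [Finsupp.single_apply, h, Ne.symm h]
  choose φ hφ using hφex
  -- the tensoring linear map f ↦ f ∘ (eval at x i)
  let L : X → (StrongDual 𝕜 Y) →ₗ[𝕜] StrongDual 𝕜 (X →L[𝕜] Y) := fun z =>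
    { toFun := fun f => tensorFunctional 𝕜 f z
      map_add' := fun f g => by ext A; simp [tensorFunctional]
      map_smul' := fun c f => by ext A; simp [tensorFunctional] }
  -- tensor functionals of support functionals are support functionals of T
  have himg : ∀ i : Fin r, ∀ f ∈ suppFunctionals 𝕜 (T (x i)),
      L (x i) f ∈ suppFunctionals 𝕜 T := by
    intro i f hf
    obtain ⟨hf1, hf2⟩ := hf
    obtain ⟨⟨hx1, hx2⟩, -⟩ := hmem i
    have hval : (L (x i) f) T = 1 := by
      simpa [L, tensorFunctional] using hf2
    constructor
    · refine le_antisymm ?_ ?_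
      · refine ContinuousLinearMap.opNorm_le_bound _ zero_le_one (fun A => ?_)
        have h1 : ‖(L (x i) f) A‖ ≤ ‖f‖ * ‖A (x i)‖ := f.le_opNorm _
        have h2 : ‖A (x i)‖ ≤ ‖A‖ * ‖x i‖ := A.le_opNorm _
        calc ‖(L (x i) f) A‖ ≤ ‖f‖ * ‖A (x i)‖ := h1
          _ = ‖A (x i)‖ := by rw [hf1, one_mul]
          _ ≤ ‖A‖ * ‖x i‖ := h2
          _ = 1 * ‖A‖ := by rw [hx1, mul_one, one_mul]
      · have h1 : ‖(L (x i) f) T‖ ≤ ‖L (x i) f‖ * ‖T‖ := (L (x i) f).le_opNorm T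
        rw [hval, hT, mul_one, norm_one] at h1
        exact h1
    · exact hval
  -- the elements of the bases map into span J(T)
  have hmemJT : ∀ (i : Fin r) (j : Fin (m i)), L (x i) (b i j : StrongDual 𝕜 Y) ∈ JT := by
    intro i j
    have h1 : (b i j : StrongDual 𝕜 Y) ∈
        Submodule.span 𝕜 (suppFunctionals 𝕜 (T (x i))) := (b i j).2
    have h2 : L (x i) (b i j : StrongDual 𝕜 Y) ∈
        (Submodule.span 𝕜 (suppFunctionals 𝕜 (T (x i)))).map (L (x i)) :=
      Submodule.mem_map_of_mem h1
    rw [Submodule.map_span] at h2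
    refine Submodule.span_mono ?_ h2
    rintro - ⟨f, hf, rfl⟩
    exact himg i f hf
  -- the combined family
  let ι := Σ i : Fin r, Fin (m i)
  let g : ι → StrongDual 𝕜 (X →L[𝕜] Y) := fun s => L (x s.1) (b s.1 s.2 : StrongDual 𝕜 Y)
  -- linear independence of g
  have hgind : LinearIndependent 𝕜 g := by
    rw [Fintype.linearIndependent_iff]
    intro c hc s
    obtain ⟨i₀, j₀⟩ := s
    -- evaluate at rank-one operators (φ i₀).smulRight y
    have key : ∀ y : Y, (∑ j : Fin (m i₀), c ⟨i₀, j⟩ • (b i₀ j : StrongDual 𝕜 Y)) y = 0 := by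
      intro y
      have h0 := congrArg (fun F : StrongDual 𝕜 (X →L[𝕜] Y) =>
        F ((φ i₀).smulRight y)) hc
      simp only [ContinuousLinearMap.coe_sum', Finset.sum_apply,
        ContinuousLinearMap.coe_smul', Pi.smul_apply,
        ContinuousLinearMap.zero_apply] at h0
      rw [← Finset.univ_sigma_univ, Finset.sum_sigma] at h0
      have h1 : ∀ i : Fin r, (∑ j : Fin (m i), c ⟨i, j⟩ • g ⟨i, j⟩ ((φ i₀).smulRight y)) =
          if i₀ = i then ∑ j : Fin (m i₀), c ⟨i₀, j⟩ • (b i₀ j : StrongDual 𝕜 Y) y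
          else 0 := by
        intro i
        by_cases h : i₀ = i
        · subst h
          rw [if_pos rfl]
          refine Finset.sum_congr rfl (fun j _ => ?_)
          simp [g, L, tensorFunctional, hφ i₀ i₀]
        · rw [if_neg h]
          refine Finset.sum_eq_zero (fun j _ => ?_)
          simp [g, L, tensorFunctional, hφ i₀ i, h]
      rw [Finset.sum_congr rfl (fun i _ => h1 i), Finset.sum_ite_eq Finset.univ i₀] at h0
      simp only [Finset.mem_univ, if_true] at h0
      simpa using h0
    -- hence the combination of basis elements vanishes in the submodule
    have hzero : (∑ j : Fin (m i₀), c ⟨i₀, j⟩ • b i₀ j) = 0 := by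
      apply Subtype.coe_injective
      simp only [AddSubmonoidClass.coe_finset_sum, SetLike.val_smul, ZeroMemClass.coe_zero]
      refine ContinuousLinearMap.ext fun y => ?_
      simpa using key y
    have hrep := (b i₀).repr.map_zero
    rw [← hzero] at hrep
    simpa [map_sum, map_smul, Finsupp.single_apply] using congrArg (fun f => f j₀) hrep
  -- corestrict to the submodule JT and conclude
  let g' : ι → ↥JT := fun s => ⟨g s, hmemJT s.1 s.2⟩
  have hg'ind : LinearIndependent 𝕜 g' := by
    apply LinearIndependent.of_comp JT.subtype
    exact hgind
  have hcard := hg'ind.cardinal_lift_le_rank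
  rw [Cardinal.mk_fintype] at hcard
  have hι : Fintype.card ι = ∑ i, m i := by
    simp [ι, Fintype.card_sigma]
  rw [hι] at hcard
  rw [Cardinal.lift_natCast] at hcard
  exact_mod_cast le_trans (le_of_eq (by norm_cast)) (hcard.trans_eq (Cardinal.lift_uzero _))
end

section
/- Let X and Y be finite-dimensional Banach spaces over K (ℝ or ℂ) with dim X = n and dim Y = m. Let T ∈ L(X,Y) with ‖T‖ = 1 be an operator of rank 1 such that T(M_T) = {λy : |λ| = 1} for some unit vector y ∈ Y. If the linear span of M_T has dimension n and y is m-smooth, then T is an extreme point of the closed unit ball of L(X,Y). -/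
open Metric Set
open scoped ENNReal

private lemma scalar_extreme_pt {𝕜 : Type*} [RCLike 𝕜] {a b : 𝕜} {t : ℝ}
    (ha : ‖a‖ ≤ 1) (hb : ‖b‖ ≤ 1) (ht0 : 0 < t) (ht1 : t < 1)
    (h : ((1 - t : ℝ) : 𝕜) * a + ((t : ℝ) : 𝕜) * b = 1) : a = 1 ∧ b = 1 := by
  have hre := congrArg RCLike.re h
  simp only [map_add, RCLike.re_ofReal_mul, RCLike.one_re] at hre
  have hra : RCLike.re a ≤ 1 := (RCLike.re_le_norm a).trans ha
  have hrb : RCLike.re b ≤ 1 := (RCLike.re_le_norm b).trans hb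
  have h1 : RCLike.re a = 1 := by nlinarith
  have h2 : RCLike.re b = 1 := by nlinarith
  constructor
  · have := RCLike.re_eq_self_of_le (a := a) (by rw [h1]; exact ha)
    rw [h1] at this; simpa using this.symm
  · have := RCLike.re_eq_self_of_le (a := b) (by rw [h2]; exact hb)
    rw [h2] at this; simpa using this.symm

theorem rank_one_extreme_contraction
    {𝕜 X Y : Type*} [RCLike 𝕜]
    [NormedAddCommGroup X] [NormedSpace 𝕜 X] [FiniteDimensional 𝕜 X]
    [NormedAddCommGroup Y] [NormedSpace 𝕜 Y] [FiniteDimensional 𝕜 Y]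
    {n m : ℕ} (hdimX : Module.finrank 𝕜 X = n) (hdimY : Module.finrank 𝕜 Y = m)
    (T : X →L[𝕜] Y) (hT : ‖T‖ = 1)
    (hrank : Module.finrank 𝕜 ↥(LinearMap.range (T : X →ₗ[𝕜] Y)) = 1)
    (y : Y) (hy : ‖y‖ = 1)
    (hTM : T '' normAttainSet 𝕜 T = {z : Y | ∃ c : 𝕜, ‖c‖ = 1 ∧ z = c • y})
    (hspan : Module.finrank 𝕜 ↥(Submodule.span 𝕜 (normAttainSet 𝕜 T)) = n)
    (hsm : IsKSmooth 𝕜 y m) :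
    T ∈ ExtremePts 𝕜 (closedBall (0 : X →L[𝕜] Y) 1) := by
  -- the span of the support functionals of y is the whole dual
  have hdualrank : Module.finrank 𝕜 (StrongDual 𝕜 Y) = m := by
    rw [(LinearMap.toContinuousLinearMap :
      (Y →ₗ[𝕜] 𝕜) ≃ₗ[𝕜] (Y →L[𝕜] 𝕜)).symm.finrank_eq, Module.finrank_linearMap,
      Module.finrank_self, mul_one, hdimY]
  have hspanJ : Submodule.span 𝕜 (suppFunctionals 𝕜 y) = ⊤ := by
    apply Submodule.eq_top_of_finrank_eq
    rw [hdualrank]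
    exact Module.finrank_eq_of_rank_eq hsm
  constructor
  · simpa [mem_closedBall, dist_zero_right] using hT.le
  · intro A hA B hB t ht0 ht1 hTeq
    rw [mem_closedBall, dist_zero_right] at hA hB
    -- key: A and B agree with T on the norm attainment set
    have key : ∀ x ∈ normAttainSet 𝕜 T, A x = T x ∧ B x = T x := by
      intro x hx
      have hTx : T x ∈ T '' normAttainSet 𝕜 T := ⟨x, hx, rfl⟩
      rw [hTM] at hTx
      obtain ⟨c, hc, hTxc⟩ := hTx
      have hc0 : c ≠ 0 := by intro h; rw [h, norm_zero] at hc; norm_num at hc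
      -- every support functional of y kills A x - T x and B x - T x
      have hker : ∀ f ∈ suppFunctionals 𝕜 y, f (A x - T x) = 0 ∧ f (B x - T x) = 0 := by
        rintro f ⟨hf1, hf2⟩
        set g : StrongDual 𝕜 Y := c⁻¹ • f with hg
        have hgn : ‖g‖ = 1 := by
          rw [hg, norm_smul, norm_inv, hc, hf1]; norm_num
        have hgTx : g (T x) = 1 := by
          rw [hg, hTxc]
          simp only [ContinuousLinearMap.smul_apply, map_smul, hf2, smul_eq_mul]
          field_simp
        have hbound : ∀ (C : X →L[𝕜] Y), ‖C‖ ≤ 1 → ‖g (C x)‖ ≤ 1 := by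
          intro C hC
          calc ‖g (C x)‖ ≤ ‖g‖ * ‖C x‖ := g.le_opNorm _
            _ ≤ 1 * (‖C‖ * ‖x‖) := by
                rw [hgn]; exact mul_le_mul_of_nonneg_left (C.le_opNorm x) zero_le_one
            _ ≤ 1 := by rw [hx.1, one_mul, mul_one]; exact hC
        have heq : ((1 - t : ℝ) : 𝕜) * g (A x) + ((t : ℝ) : 𝕜) * g (B x) = 1 := by
          have := congrArg (fun C : X →L[𝕜] Y => g (C x)) hTeq
          simp only [ContinuousLinearMap.add_apply, ContinuousLinearMap.coe_smul',
            Pi.smul_apply, map_add, map_smul, smul_eq_mul] at this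
          rw [← this, hgTx]
        obtain ⟨hga, hgb⟩ := scalar_extreme_pt (hbound A hA) (hbound B hB) ht0 ht1 heq
        have hgA : g (A x - T x) = 0 := by rw [map_sub, hga, hgTx, sub_self]
        have hgB : g (B x - T x) = 0 := by rw [map_sub, hgb, hgTx, sub_self]
        rw [hg] at hgA hgB
        simp only [ContinuousLinearMap.smul_apply, smul_eq_mul,
          mul_eq_zero, inv_eq_zero] at hgA hgB
        exact ⟨hgA.resolve_left hc0, hgB.resolve_left hc0⟩
      -- hence all functionals kill them, since the support functionals span the dual
      have hall : ∀ (v : Y), (∀ f ∈ suppFunctionals 𝕜 y, f v = 0) → v = 0 := by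
        intro v hv
        rw [NormedSpace.eq_zero_iff_forall_dual_eq_zero 𝕜 v]
        intro f
        have : f ∈ LinearMap.ker ((ContinuousLinearMap.apply 𝕜 𝕜 v :
            StrongDual 𝕜 Y →L[𝕜] 𝕜) : StrongDual 𝕜 Y →ₗ[𝕜] 𝕜) := by
          have hsub : suppFunctionals 𝕜 y ⊆
              (LinearMap.ker ((ContinuousLinearMap.apply 𝕜 𝕜 v :
                StrongDual 𝕜 Y →L[𝕜] 𝕜) : StrongDual 𝕜 Y →ₗ[𝕜] 𝕜) : Set _) := by
            intro φ hφ
            exact hv φ hφ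
          have := Submodule.span_le.mpr hsub
          rw [hspanJ] at this
          exact this Submodule.mem_top
        exact this
      constructor
      · have := hall (A x - T x) (fun f hf => (hker f hf).1)
        exact sub_eq_zero.mp this
      · have := hall (B x - T x) (fun f hf => (hker f hf).2)
        exact sub_eq_zero.mp this
    -- conclude A = T, B = T since span of the norm attainment set is all of X
    have hspanTop : Submodule.span 𝕜 (normAttainSet 𝕜 T) = ⊤ := by
      apply Submodule.eq_top_of_finrank_eq
      rw [hspan, hdimX]
    have hagree : ∀ (C : X →L[𝕜] Y), (∀ x ∈ normAttainSet 𝕜 T, C x = T x) → C = T := by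
      intro C hC
      have : Submodule.span 𝕜 (normAttainSet 𝕜 T) ≤
          LinearMap.ker ((C - T : X →L[𝕜] Y) : X →ₗ[𝕜] Y) := by
        apply Submodule.span_le.mpr
        intro x hx
        simp only [SetLike.mem_coe, LinearMap.mem_ker, ContinuousLinearMap.coe_coe,
          ContinuousLinearMap.sub_apply, sub_eq_zero]
        exact hC x hx
      rw [hspanTop, top_le_iff] at this
      have hz : (C - T : X →L[𝕜] Y) = 0 := by
        ext x
        have := LinearMap.ker_eq_top.mp this
        exact congrFun (congrArg (fun f : X →ₗ[𝕜] Y => (f : X → Y)) this) x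
      rw [sub_eq_zero] at hz
      exact hz
    exact ⟨hagree A (fun x hx => (key x hx).1), hagree B (fun x hx => (key x hx).2)⟩
end

section
/- Let X and Y be finite-dimensional polyhedral real Banach spaces with dim X = m and dim Y = n, and let T ∈ L(X,Y) with ‖T‖ = 1. Then T is an extreme point of the closed unit ball of L(X,Y) if and only if i_{M_T}(T) = mn. -/
open Metric Set
open scoped ENNReal

noncomputable section AuxProof

section Aux
variable {X : Type*} [NormedAddCommGroup X] [NormedSpace ℝ X]

lemma extremePts_eq (A : Set X) : ExtremePts ℝ A = A.extremePoints ℝ := by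
  ext z
  constructor
  · rintro ⟨hz, h⟩
    refine ⟨hz, fun x hx y hy hseg => ?_⟩
    obtain ⟨a, b, ha, hb, hab, habz⟩ := hseg
    exact (h x hx y hy b hb (by linarith)
      (by rw [← habz, show a = 1 - b by linarith]; rfl)).1
  · rintro ⟨hz, h⟩
    refine ⟨hz, fun x hx y hy t ht0 ht1 hzeq => ?_⟩
    exact ⟨h hx hy ⟨1 - t, t, by linarith, ht0, by ring, hzeq.symm⟩,
      h hy hx ⟨t, 1 - t, ht0, by linarith, by ring, by rw [hzeq]; exact add_comm _ _⟩⟩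

lemma mem_extremePts_of_subset {A S : Set X} (hSA : S ⊆ A) {z : X}
    (hz : z ∈ ExtremePts ℝ A) (hzS : z ∈ S) : z ∈ ExtremePts ℝ S :=
  ⟨hzS, fun x hx y hy t ht0 ht1 heq => hz.2 x (hSA hx) y (hSA hy) t ht0 ht1 heq⟩

variable [FiniteDimensional ℝ X]

lemma closedBall_eq_closure_hull :
    closure (convexHull ℝ ((closedBall (0:X) 1).extremePoints ℝ)) = closedBall (0:X) 1 :=
  closure_convexHull_extremePoints (isCompact_closedBall 0 1) (convex_closedBall 0 1)

end Aux

section Aux2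
variable {Y : Type*} [NormedAddCommGroup Y] [NormedSpace ℝ Y] [FiniteDimensional ℝ Y]

lemma fy_le_one (f : StrongDual ℝ Y) (hf : ‖f‖ ≤ 1) (y : Y) (hy : ‖y‖ ≤ 1) :
    f y ≤ 1 := by
  have h1 : ‖f y‖ ≤ ‖f‖ * ‖y‖ := f.le_opNorm y
  have h2 : f y ≤ |f y| := le_abs_self _
  rw [← Real.norm_eq_abs] at h2
  nlinarith [norm_nonneg (f y), norm_nonneg f, norm_nonneg y]

lemma norm_le_one_of_extreme_dual (y : Y)
    (h : ∀ f ∈ (closedBall (0 : StrongDual ℝ Y) 1).extremePoints ℝ, f y ≤ 1) :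
    ‖y‖ ≤ 1 := by
  rcases eq_or_ne y 0 with rfl | hy
  · simp
  obtain ⟨g, hg1, hgy⟩ := exists_dual_vector ℝ y (norm_ne_zero_iff.2 hy)
  have hgball : g ∈ closedBall (0 : StrongDual ℝ Y) 1 :=
    mem_closedBall_zero_iff.2 hg1.le
  have hsub : closedBall (0 : StrongDual ℝ Y) 1 ⊆ {f : StrongDual ℝ Y | f y ≤ 1} := by
    rw [← closedBall_eq_closure_hull]
    refine closure_minimal (convexHull_min (fun f hf => h f hf) ?_) ?_
    · exact convex_halfSpace_le ⟨fun a b => rfl, fun c a => rfl⟩ 1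
    · exact isClosed_le ((ContinuousLinearMap.apply ℝ ℝ y).continuous) continuous_const
  have hg2 : g y ≤ 1 := hsub hgball
  rw [hgy] at hg2
  exact hg2

lemma dual_norm_le_one (g : StrongDual ℝ Y)
    (h : ∀ x ∈ (closedBall (0:Y) 1).extremePoints ℝ, g x ≤ 1) : ‖g‖ ≤ 1 := by
  refine ContinuousLinearMap.opNorm_le_of_unit_norm zero_le_one fun x hx => ?_
  have hsub : closedBall (0:Y) 1 ⊆ {z : Y | g z ≤ 1} := by
    rw [← closedBall_eq_closure_hull]
    refine closure_minimal (convexHull_min (fun z hz => h z hz) ?_) ?_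
    · exact convex_halfSpace_le ⟨map_add g, fun c a => map_smul g c a⟩ 1
    · exact isClosed_le g.continuous continuous_const
  have h1 : g x ≤ 1 := hsub (mem_closedBall_zero_iff.2 hx.le)
  have h2 : g (-x) ≤ 1 := hsub (mem_closedBall_zero_iff.2 (by rw [norm_neg, hx]))
  rw [map_neg] at h2
  rw [Real.norm_eq_abs, abs_le]
  constructor <;> linarith

lemma exists_pos_forall_le {ι : Type*} {s : Set ι} (hs : s.Finite) (u : ι → ℝ)
    (hu : ∀ i ∈ s, 0 < u i) : ∃ ε : ℝ, 0 < ε ∧ ∀ i ∈ s, ε ≤ u i := by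
  rcases s.eq_empty_or_nonempty with rfl | hne
  · exact ⟨1, one_pos, by simp⟩
  · obtain ⟨i₀, hi₀, hmin⟩ := Set.exists_min_image s u hs hne
    exact ⟨u i₀, hu i₀ hi₀, hmin⟩

end Aux2

section Aux3
variable {Y : Type*} [NormedAddCommGroup Y] [NormedSpace ℝ Y] [FiniteDimensional ℝ Y]

lemma active_span_top (hpolyY : ((closedBall (0:Y) 1).extremePoints ℝ).Finite)
    {f : StrongDual ℝ Y}
    (hf : f ∈ (closedBall (0 : StrongDual ℝ Y) 1).extremePoints ℝ) :
    Submodule.span ℝ {x | x ∈ (closedBall (0:Y) 1).extremePoints ℝ ∧ f x = 1} = ⊤ := by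
  set E := (closedBall (0:Y) 1).extremePoints ℝ with hE
  by_contra hne
  obtain ⟨h0, hh0, hmap⟩ := Submodule.exists_dual_map_eq_bot_of_lt_top
    (lt_top_iff_ne_top.2 hne) inferInstance
  set hc : Y →L[ℝ] ℝ := LinearMap.toContinuousLinearMap h0 with hhc
  have hcs : ∀ x : Y, hc x = h0 x := fun x => rfl
  have hfn : ‖f‖ ≤ 1 := mem_closedBall_zero_iff.1 hf.1
  have hflt : ∀ x ∈ E, f x ≤ 1 := fun x hx =>
    fy_le_one f hfn x (mem_closedBall_zero_iff.1 hx.1)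
  obtain ⟨ε, hε, hεle⟩ := exists_pos_forall_le hpolyY
    (fun x => if f x = 1 then 1 else (1 - f x) / (|hc x| + 1)) (fun x hx => by
      by_cases h1 : f x = 1
      · simp [h1]
      · rw [if_neg h1]
        have := hflt x hx
        have hlt : f x < 1 := lt_of_le_of_ne this h1
        exact div_pos (by linarith) (by positivity))
  have key : ∀ σ : ℝ, |σ| = 1 → ‖f + (σ * ε) • hc‖ ≤ 1 := by
    intro σ hσ
    refine dual_norm_le_one _ fun x hx => ?_
    simp only [ContinuousLinearMap.add_apply, ContinuousLinearMap.smul_apply, smul_eq_mul]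
    by_cases h1 : f x = 1
    · have hx0 : h0 x = 0 := by
        have : h0 x ∈ (Submodule.span ℝ {x | x ∈ E ∧ f x = 1}).map h0 :=
          Submodule.mem_map_of_mem (Submodule.subset_span ⟨hx, h1⟩)
        rw [hmap] at this
        simpa using this
      rw [hcs, hx0, h1]; simp
    · have hlt : f x < 1 := lt_of_le_of_ne (hflt x hx) h1
      have h2 := hεle x hx
      rw [if_neg h1] at h2
      have hden : (0:ℝ) < |hc x| + 1 := by positivity
      rw [le_div_iff₀ hden] at h2
      have h3 : σ * ε * hc x ≤ ε * |hc x| := by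
        have := le_abs_self (σ * ε * hc x)
        rw [abs_mul, abs_mul, hσ, abs_of_pos hε] at this
        linarith
      nlinarith [abs_nonneg (hc x)]
  have hA : f + ε • hc ∈ closedBall (0 : StrongDual ℝ Y) 1 :=
    mem_closedBall_zero_iff.2 (by simpa using key 1 (by norm_num))
  have hB : f - ε • hc ∈ closedBall (0 : StrongDual ℝ Y) 1 := by
    refine mem_closedBall_zero_iff.2 ?_
    have := key (-1) (by norm_num)
    have he : f + (-1 * ε) • hc = f - ε • hc := by module
    rwa [he] at this
  have h1 := hf.2 hA hB ⟨1/2, 1/2, by norm_num, by norm_num, by norm_num, by module⟩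
  have : ε • hc = 0 := by
    have := congrArg (fun g => g - f) h1
    simpa [add_sub_cancel_left] using this
  have hc0 : hc = 0 := by
    rcases smul_eq_zero.1 this with h | h
    · exact absurd h (ne_of_gt hε)
    · exact h
  apply hh0
  ext x
  have := hcs x
  rw [hc0] at this
  simpa using this.symm

lemma dual_polyhedral (hpolyY : ((closedBall (0:Y) 1).extremePoints ℝ).Finite) :
    ((closedBall (0 : StrongDual ℝ Y) 1).extremePoints ℝ).Finite := by
  set E := (closedBall (0:Y) 1).extremePoints ℝ with hE
  have : Finite ↥E := hpolyY
  rw [← Set.finite_coe_iff]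
  refine Finite.of_injective
    (fun f => ({x : ↥E | (f : StrongDual ℝ Y) x.1 = 1} : Set ↥E)) ?_
  rintro ⟨f, hf⟩ ⟨g, hg⟩ h
  have hsets : {x | x ∈ E ∧ f x = 1} = {x | x ∈ E ∧ g x = 1} := by
    ext x
    constructor
    · rintro ⟨hx, hx1⟩
      have h2 := Set.ext_iff.1 h ⟨x, hx⟩
      simp only [Set.mem_setOf_eq] at h2
      exact ⟨hx, h2.1 hx1⟩
    · rintro ⟨hx, hx1⟩
      have h2 := Set.ext_iff.1 h ⟨x, hx⟩
      simp only [Set.mem_setOf_eq] at h2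
      exact ⟨hx, h2.2 hx1⟩
  have hspan := active_span_top hpolyY hf
  have hagree : Submodule.span ℝ {x | x ∈ E ∧ f x = 1} ≤ LinearMap.ker ((f - g : StrongDual ℝ Y) : Y →ₗ[ℝ] ℝ) := by
    rw [Submodule.span_le]
    rintro x ⟨hx, hx1⟩
    have hx2 : g x = 1 := by
      have : x ∈ {x | x ∈ E ∧ g x = 1} := hsets ▸ ⟨hx, hx1⟩
      exact this.2
    simp [LinearMap.mem_ker, ContinuousLinearMap.sub_apply, hx1, hx2]
  rw [hspan, top_le_iff] at hagree
  have : f - g = 0 := by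
    ext x
    have : x ∈ LinearMap.ker ((f - g : StrongDual ℝ Y) : Y →ₗ[ℝ] ℝ) := hagree ▸ Submodule.mem_top
    simpa using this
  have : f = g := by
    have := congrArg (fun h => h + g) this
    simpa using this
  exact Subtype.ext this
end Aux3



section Pert
variable {X Y : Type*} [NormedAddCommGroup X] [NormedSpace ℝ X] [FiniteDimensional ℝ X]
  [NormedAddCommGroup Y] [NormedSpace ℝ Y] [FiniteDimensional ℝ Y]

lemma opNorm_le_one (S : X →L[ℝ] Y)
    (h : ∀ x ∈ (closedBall (0:X) 1).extremePoints ℝ,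
      ∀ f ∈ (closedBall (0 : StrongDual ℝ Y) 1).extremePoints ℝ, f (S x) ≤ 1) :
    ‖S‖ ≤ 1 := by
  refine ContinuousLinearMap.opNorm_le_of_unit_norm zero_le_one fun x hx => ?_
  set C : Set X :=
    {z | ∀ f ∈ (closedBall (0 : StrongDual ℝ Y) 1).extremePoints ℝ, f (S z) ≤ 1} with hC
  have hsub : closedBall (0:X) 1 ⊆ C := by
    rw [← closedBall_eq_closure_hull]
    refine closure_minimal (convexHull_min (fun z hz => h z hz) ?_) ?_
    · intro a ha b hb s t hs ht hst
      intro f hf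
      have h1 := ha f hf
      have h2 := hb f hf
      simp only [map_add, map_smul, smul_eq_mul]
      nlinarith
    · have : C = ⋂ f ∈ (closedBall (0 : StrongDual ℝ Y) 1).extremePoints ℝ,
          {z : X | f (S z) ≤ 1} := by
        ext z; simp [hC]
      rw [this]
      exact isClosed_biInter fun f hf =>
        isClosed_le (f.continuous.comp S.continuous) continuous_const
  exact norm_le_one_of_extreme_dual (S x) (hsub (mem_closedBall_zero_iff.2 hx.le))

lemma not_extreme_of_orth (hpolyX : ((closedBall (0:X) 1).extremePoints ℝ).Finite)
    (hpolyY : ((closedBall (0:Y) 1).extremePoints ℝ).Finite)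
    (T : X →L[ℝ] Y) (hT : ‖T‖ = 1) (D : X →L[ℝ] Y) (hD0 : D ≠ 0)
    (hD : ∀ x ∈ normAttainSet ℝ T ∩ ExtremePts ℝ (closedBall (0:X) 1),
      ∀ f ∈ ExtremePts ℝ (suppFunctionals ℝ (T x)), f (D x) = 0) :
    T ∉ ExtremePts ℝ (closedBall (0 : X →L[ℝ] Y) 1) := by
  intro hext
  have hEd := dual_polyhedral hpolyY
  set s := ((closedBall (0:X) 1).extremePoints ℝ) ×ˢ
    ((closedBall (0 : StrongDual ℝ Y) 1).extremePoints ℝ) with hs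
  have hsfin : s.Finite := hpolyX.prod hEd
  have hle1 : ∀ q ∈ s, q.2 (T q.1) ≤ 1 := by
    rintro ⟨x, f⟩ ⟨hx, hf⟩
    refine fy_le_one f (mem_closedBall_zero_iff.1 hf.1) (T x) ?_
    calc ‖T x‖ ≤ ‖T‖ * ‖x‖ := T.le_opNorm x
    _ ≤ 1 := by
      have := mem_closedBall_zero_iff.1 hx.1
      nlinarith [norm_nonneg x]
  obtain ⟨ε, hε, hεle⟩ := exists_pos_forall_le hsfin
    (fun q => if q.2 (T q.1) = 1 then 1 else (1 - q.2 (T q.1)) / (|q.2 (D q.1)| + 1))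
    (fun q hq => by
      by_cases h1 : q.2 (T q.1) = 1
      · simp [h1]
      · rw [if_neg h1]
        have hlt : q.2 (T q.1) < 1 := lt_of_le_of_ne (hle1 q hq) h1
        exact div_pos (by linarith) (by positivity))
  have key : ∀ σ : ℝ, |σ| = 1 → ‖T + (σ * ε) • D‖ ≤ 1 := by
    intro σ hσ
    refine opNorm_le_one _ fun x hx f hf => ?_
    simp only [ContinuousLinearMap.add_apply, ContinuousLinearMap.smul_apply, map_add,
      map_smul, smul_eq_mul]
    have hq : (x, f) ∈ s := ⟨hx, hf⟩
    by_cases h1 : f (T x) = 1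
    · have hxle : ‖x‖ ≤ 1 := mem_closedBall_zero_iff.1 hx.1
      have hfle : ‖f‖ ≤ 1 := mem_closedBall_zero_iff.1 hf.1
      have hfTx : (1:ℝ) ≤ ‖f‖ * ‖T x‖ := by
        rw [← h1]
        calc f (T x) ≤ |f (T x)| := le_abs_self _
        _ = ‖f (T x)‖ := (Real.norm_eq_abs _).symm
        _ ≤ ‖f‖ * ‖T x‖ := f.le_opNorm _
      have hTxle : ‖T x‖ ≤ 1 := by
        calc ‖T x‖ ≤ ‖T‖ * ‖x‖ := T.le_opNorm x
        _ ≤ 1 := by nlinarith [norm_nonneg x]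
      have hTx1 : ‖T x‖ = 1 := by nlinarith [norm_nonneg (T x), norm_nonneg f]
      have hf1 : ‖f‖ = 1 := by nlinarith [norm_nonneg f]
      have hx1 : ‖x‖ = 1 := by
        have h2 : ‖T x‖ ≤ ‖T‖ * ‖x‖ := T.le_opNorm x
        rw [hTx1, hT] at h2
        simp at h2
        linarith
      have hxM : x ∈ normAttainSet ℝ T ∩ ExtremePts ℝ (closedBall (0:X) 1) := by
        constructor
        · exact ⟨hx1, by rw [hTx1, hT]⟩
        · rw [extremePts_eq]; exact hx
      have hfJ : f ∈ ExtremePts ℝ (suppFunctionals ℝ (T x)) := by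
        refine mem_extremePts_of_subset (A := closedBall (0 : StrongDual ℝ Y) 1) ?_ ?_ ⟨hf1, h1⟩
        · intro g hg
          exact mem_closedBall_zero_iff.2 hg.1.le
        · rw [extremePts_eq]; exact hf
      rw [hD x hxM f hfJ, h1]
      simp
    · have hlt : f (T x) < 1 := lt_of_le_of_ne (hle1 (x, f) hq) h1
      have h2 := hεle (x, f) hq
      rw [if_neg h1] at h2
      have hden : (0:ℝ) < |f (D x)| + 1 := by positivity
      rw [le_div_iff₀ hden] at h2
      have h3 : σ * ε * f (D x) ≤ ε * |f (D x)| := by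
        have := le_abs_self (σ * ε * f (D x))
        rw [abs_mul, abs_mul, hσ, abs_of_pos hε] at this
        linarith
      nlinarith [abs_nonneg (f (D x))]
  have hA : T + ε • D ∈ closedBall (0 : X →L[ℝ] Y) 1 :=
    mem_closedBall_zero_iff.2 (by simpa using key 1 (by norm_num))
  have hB : T - ε • D ∈ closedBall (0 : X →L[ℝ] Y) 1 := by
    refine mem_closedBall_zero_iff.2 ?_
    have := key (-1) (by norm_num)
    have he : T + (-1 * ε) • D = T - ε • D := by module
    rwa [he] at this
  obtain ⟨h1, -⟩ := hext.2 _ hA _ hB (1/2) (by norm_num) (by norm_num) (by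
    show T = ((1 - 1/2 : ℝ) : ℝ) • (T + ε • D) + ((1/2 : ℝ) : ℝ) • (T - ε • D)
    norm_num
    module)
  have hzero : ε • D = 0 := by
    have := congrArg (fun g => g - T) h1
    simpa [add_sub_cancel_left] using this
  rcases smul_eq_zero.1 hzero with h | h
  · exact absurd h (ne_of_gt hε)
  · exact hD0 h

end Pert






section Helpers
variable {X Y : Type*} [NormedAddCommGroup X] [NormedSpace ℝ X]
  [NormedAddCommGroup Y] [NormedSpace ℝ Y]

lemma pairing_sum {nv p : ℕ} (v : Fin nv → X) (w : Fin p → StrongDual ℝ Y)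
    (D : X →L[ℝ] Y) (α : Fin nv → ℝ) (β : Fin p → ℝ) :
    (∑ j, β j • w j) (D (∑ i, α i • v i)) =
      ∑ ij : Fin nv × Fin p, (α ij.1 * β ij.2) * (w ij.2 (D (v ij.1))) := by
  rw [Fintype.sum_prod_type]
  simp only [ContinuousLinearMap.sum_apply, ContinuousLinearMap.smul_apply, map_sum,
    map_smul, smul_eq_mul, Finset.mul_sum]
  simp_rw [← mul_assoc]
  try exact Finset.sum_comm

lemma eq_zero_of_forall_dual (y : Y) (h : ∀ f : StrongDual ℝ Y, f y = 0) : y = 0 := by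
  by_contra hy
  obtain ⟨g, hg1, hgy⟩ := exists_dual_vector ℝ y (norm_ne_zero_iff.2 hy)
  rw [h g] at hgy
  exact hy (norm_eq_zero.1 hgy.symm)

def evalDual (y : Y) : StrongDual ℝ Y →ₗ[ℝ] ℝ where
  toFun f := f y
  map_add' f g := rfl
  map_smul' c f := rfl

lemma span_eval_zero {s : Set (StrongDual ℝ Y)} {y : Y}
    (h : ∀ f ∈ s, f y = 0) :
    ∀ f ∈ Submodule.span ℝ s, (f : StrongDual ℝ Y) y = 0 := by
  intro f hf
  have hle : Submodule.span ℝ s ≤ LinearMap.ker (evalDual y) :=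
    Submodule.span_le.2 fun g hg => by simpa [LinearMap.mem_ker, evalDual] using h g hg
  simpa [evalDual] using LinearMap.mem_ker.1 (hle hf)

lemma finrank_dual_eq [FiniteDimensional ℝ Y] :
    Module.finrank ℝ (StrongDual ℝ Y) = Module.finrank ℝ Y := by
  have e : (Y →ₗ[ℝ] ℝ) ≃ₗ[ℝ] StrongDual ℝ Y := LinearMap.toContinuousLinearMap
  rw [← e.finrank_eq, Subspace.dual_finrank_eq]

lemma isBasisOfSpan_finBasis [FiniteDimensional ℝ X] (R : Set X) :
    IsBasisOfSpan ℝ (fun i => ((Module.finBasis ℝ ↥(Submodule.span ℝ R)) i : X)) R := by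
  constructor
  · exact (Module.finBasis ℝ ↥(Submodule.span ℝ R)).linearIndependent.map'
      (Submodule.span ℝ R).subtype (Submodule.ker_subtype _)
  · have h1 : Set.range (fun i => ((Module.finBasis ℝ ↥(Submodule.span ℝ R)) i : X))
        = (Submodule.span ℝ R).subtype '' Set.range (Module.finBasis ℝ ↥(Submodule.span ℝ R)) := by
      rw [← Set.range_comp]; rfl
    rw [h1, Submodule.span_image, (Module.finBasis ℝ ↥(Submodule.span ℝ R)).span_eq,
      Submodule.map_top, Submodule.range_subtype]

end Helpers


section DirA
variable {X Y : Type*} [NormedAddCommGroup X] [NormedSpace ℝ X] [FiniteDimensional ℝ X]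
  [NormedAddCommGroup Y] [NormedSpace ℝ Y] [FiniteDimensional ℝ Y]

lemma midpoint_support_eq {T A B : X →L[ℝ] Y} {t : ℝ} (ht0 : 0 < t) (ht1 : t < 1)
    (heq : T = (1 - t) • A + t • B) (hAle : ‖A‖ ≤ 1)
    {x : X} (hx : ‖x‖ = 1) {f : StrongDual ℝ Y} (hf : ‖f‖ = 1) (hfTx : f (T x) = 1)
    (hBle : ‖B‖ ≤ 1) : f ((A - T) x) = 0 := by
  have hfAx : f (A x) ≤ 1 := fy_le_one f hf.le (A x)
    (by calc ‖A x‖ ≤ ‖A‖ * ‖x‖ := A.le_opNorm x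
        _ ≤ 1 := by rw [hx]; simpa using hAle)
  have hfBx : f (B x) ≤ 1 := fy_le_one f hf.le (B x)
    (by calc ‖B x‖ ≤ ‖B‖ * ‖x‖ := B.le_opNorm x
        _ ≤ 1 := by rw [hx]; simpa using hBle)
  have happ : f (T x) = (1 - t) * f (A x) + t * f (B x) := by
    conv_lhs => rw [heq]
    simp [ContinuousLinearMap.add_apply, ContinuousLinearMap.smul_apply, map_add, map_smul]
  have hfAx1 : f (A x) = 1 := by nlinarith
  simp only [ContinuousLinearMap.sub_apply, map_sub]
  rw [hfAx1, hfTx, sub_self]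

lemma extreme_of_index {m n : ℕ} (hdimX : Module.finrank ℝ X = m)
    (hdimY : Module.finrank ℝ Y = n) (T : X →L[ℝ] Y) (hT : ‖T‖ = 1)
    (hind : HasIndexOfSmoothness ℝ T (normAttainSet ℝ T) (m * n)) :
    T ∈ ExtremePts ℝ (closedBall (0 : X →L[ℝ] Y) 1) := by
  have hT0 : T ≠ 0 := fun h => by rw [h] at hT; simp at hT
  obtain ⟨x₀, hx₀⟩ : ∃ x, T x ≠ 0 := by
    by_contra h; push_neg at h; exact hT0 (ContinuousLinearMap.ext fun x => by simp [h x])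
  haveI hXnt : Nontrivial X := ⟨⟨x₀, 0, fun h => hx₀ (by rw [h, map_zero])⟩⟩
  haveI hYnt : Nontrivial Y := ⟨⟨T x₀, 0, hx₀⟩⟩
  have hm : 0 < m := hdimX ▸ Module.finrank_pos
  have hn : 0 < n := hdimY ▸ Module.finrank_pos
  set R := normAttainSet ℝ T with hRdef
  set nv := Module.finrank ℝ ↥(Submodule.span ℝ R) with hnvdef
  set pw := Module.finrank ℝ ↥(Submodule.span ℝ (suppOfImage ℝ T R)) with hpwdef
  obtain ⟨v, hv⟩ : ∃ v : Fin nv → X, IsBasisOfSpan ℝ v R := ⟨_, isBasisOfSpan_finBasis R⟩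
  obtain ⟨w, hw⟩ : ∃ w : Fin pw → StrongDual ℝ Y,
      IsBasisOfSpan ℝ w (suppOfImage ℝ T R) := ⟨_, isBasisOfSpan_finBasis _⟩
  have hZ := hind nv pw v w hv hw
  set Z := indexSubspace ℝ T R v w with hZdef
  -- dimension bounds
  have hZle : Module.finrank ℝ ↥Z ≤ nv * pw := by
    calc Module.finrank ℝ ↥Z ≤ Module.finrank ℝ (Fin nv × Fin pw → ℝ) := Z.finrank_le
    _ = nv * pw := by rw [Module.finrank_pi]; simp
  have hnvle : nv ≤ m := by rw [hnvdef, ← hdimX]; exact Submodule.finrank_le _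
  have hpwle : pw ≤ n := by
    rw [hpwdef, ← hdimY, ← finrank_dual_eq (Y := Y)]; exact Submodule.finrank_le _
  have h1 : m * n ≤ nv * pw := hZ ▸ hZle
  have e3 : m * pw = m * n := le_antisymm (Nat.mul_le_mul_left _ hpwle)
    (h1.trans (Nat.mul_le_mul_right _ hnvle))
  have hpweq : pw = n := Nat.eq_of_mul_eq_mul_left hm e3
  have hnveq : nv = m := by
    have e4 : nv * pw = m * pw := by
      refine le_antisymm (Nat.mul_le_mul_right _ hnvle) ?_
      rw [e3]; exact h1
    exact Nat.eq_of_mul_eq_mul_right (hpweq ▸ hn) e4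
  have hVtop : Submodule.span ℝ R = ⊤ := Submodule.eq_top_of_finrank_eq
    (by rw [hdimX, ← hnvdef]; exact hnveq)
  have hWtop : Submodule.span ℝ (suppOfImage ℝ T R) = ⊤ := Submodule.eq_top_of_finrank_eq
    (by rw [finrank_dual_eq (Y := Y), hdimY, ← hpwdef]; exact hpweq)
  have hZtop : Z = ⊤ := Submodule.eq_top_of_finrank_eq
    (by rw [hZ, Module.finrank_pi]; simp [hnveq, hpweq])
  have hvspan : Submodule.span ℝ (Set.range v) = ⊤ := by rw [hv.2, hVtop]
  have hwspan : Submodule.span ℝ (Set.range w) = ⊤ := by rw [hw.2, hWtop]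
  clear hZ hZle hnvle hpwle h1 e3 hVtop hWtop
  -- extreme point property
  refine ⟨mem_closedBall_zero_iff.2 hT.le, ?_⟩
  intro A hA B hB t ht0 ht1 heq
  have hAle : ‖A‖ ≤ 1 := mem_closedBall_zero_iff.1 hA
  have hBle : ‖B‖ ≤ 1 := mem_closedBall_zero_iff.1 hB
  have heq' : T = (1 - t) • A + t • B := heq
  have hAT : A = T := by
    set D : X →L[ℝ] Y := A - T with hDdef
    set L : (Fin nv × Fin pw → ℝ) →ₗ[ℝ] ℝ :=
      ∑ ij : Fin nv × Fin pw, (w ij.2 (D (v ij.1))) • (LinearMap.proj ij) with hLdef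
    have hLz : ∀ z : Fin nv × Fin pw → ℝ, L z = 0 := by
      have hle : Z ≤ LinearMap.ker L := by
        rw [hZdef, indexSubspace]
        refine Submodule.span_le.2 ?_
        rintro z ⟨α, β, hx, hy, rfl⟩
        rw [SetLike.mem_coe, LinearMap.mem_ker, hLdef]
        have hfDx : (∑ j, β j • w j) (D (∑ i, α i • v i)) = 0 := by
          rw [hDdef]
          exact midpoint_support_eq ht0 ht1 heq' hAle hx.1.1 hy.1.1 hy.1.2 hBle
        rw [pairing_sum v w D α β] at hfDx
        simp only [LinearMap.sum_apply, LinearMap.smul_apply, LinearMap.proj_apply, smul_eq_mul]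
        rw [← hfDx]
        exact Finset.sum_congr rfl fun ij _ => mul_comm _ _
      intro z
      have : z ∈ LinearMap.ker L := hle (hZtop ▸ Submodule.mem_top)
      exact LinearMap.mem_ker.1 this
    have hkey : ∀ i j, w j (D (v i)) = 0 := by
      intro i j
      have := hLz (Pi.single (i, j) 1)
      rw [hLdef] at this
      simp only [LinearMap.sum_apply, LinearMap.smul_apply, LinearMap.proj_apply,
        smul_eq_mul, Pi.single_apply] at this
      rw [Finset.sum_eq_single (i, j)] at this
      · simpa using this
      · intro kl _ hkl
        rw [if_neg hkl]
        ring
      · intro h; exact absurd (Finset.mem_univ _) h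
    have hDv : ∀ i, D (v i) = 0 := by
      intro i
      refine eq_zero_of_forall_dual _ fun f => ?_
      refine span_eval_zero (s := Set.range w) ?_ f (by rw [hwspan]; trivial)
      rintro g ⟨j, rfl⟩
      exact hkey i j
    have hDall : D = 0 := by
      have hle : Submodule.span ℝ (Set.range v) ≤ LinearMap.ker (D : X →ₗ[ℝ] Y) :=
        Submodule.span_le.2 (by rintro _ ⟨i, rfl⟩; simp [LinearMap.mem_ker, hDv i])
      ext x
      have : x ∈ LinearMap.ker (D : X →ₗ[ℝ] Y) := hle (by rw [hvspan]; trivial)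
      simpa using this
    have := congrArg (fun S => S + T) hDall
    simpa [hDdef, sub_add_cancel] using this
  refine ⟨hAT, ?_⟩
  rw [hAT] at heq'
  have hBT : t • B = t • T := by
    calc t • B = (1 - t) • T + t • B - (1 - t) • T := by abel
    _ = T - (1 - t) • T := by rw [← heq']
    _ = t • T := by module
  exact smul_right_injective _ (ne_of_gt ht0) hBT

end DirA

section DirB
variable {X Y : Type*} [NormedAddCommGroup X] [NormedSpace ℝ X] [FiniteDimensional ℝ X]
  [NormedAddCommGroup Y] [NormedSpace ℝ Y] [FiniteDimensional ℝ Y]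

lemma index_of_extreme
    (hpX : ((closedBall (0:X) 1).extremePoints ℝ).Finite)
    (hpY : ((closedBall (0:Y) 1).extremePoints ℝ).Finite)
    {m n : ℕ} (hdimX : Module.finrank ℝ X = m) (hdimY : Module.finrank ℝ Y = n)
    (T : X →L[ℝ] Y) (hT : ‖T‖ = 1)
    (hext : T ∈ ExtremePts ℝ (closedBall (0 : X →L[ℝ] Y) 1)) :
    HasIndexOfSmoothness ℝ T (normAttainSet ℝ T) (m * n) := by
  have hT0 : T ≠ 0 := fun h => by rw [h] at hT; simp at hT
  obtain ⟨x₀, hx₀⟩ : ∃ x, T x ≠ 0 := by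
    by_contra h; push_neg at h; exact hT0 (ContinuousLinearMap.ext fun x => by simp [h x])
  have hx₀0 : x₀ ≠ 0 := fun h => hx₀ (by rw [h, map_zero])
  haveI hXnt : Nontrivial X := ⟨⟨x₀, 0, hx₀0⟩⟩
  haveI hYnt : Nontrivial Y := ⟨⟨T x₀, 0, hx₀⟩⟩
  set R := normAttainSet ℝ T with hRdef
  -- Step 1 : span R = ⊤
  have hspanR : Submodule.span ℝ R = ⊤ := by
    by_contra hne
    obtain ⟨f0, hf00, hmap⟩ := Submodule.exists_dual_map_eq_bot_of_lt_top
      (lt_top_iff_ne_top.2 hne) inferInstance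
    obtain ⟨y₀, hy₀⟩ := exists_ne (0 : Y)
    set g : X →L[ℝ] ℝ := LinearMap.toContinuousLinearMap f0 with hgdef
    have hgf : ∀ x : X, g x = f0 x := fun x => rfl
    set D : X →L[ℝ] Y := g.smulRight y₀ with hDdef
    have hD0 : D ≠ 0 := by
      obtain ⟨x1, hx1⟩ : ∃ x, f0 x ≠ 0 := by
        by_contra h; push_neg at h; exact hf00 (LinearMap.ext fun x => by simp [h x])
      intro h
      have h2 : D x1 = 0 := by rw [h]; rfl
      rw [hDdef] at h2
      simp only [ContinuousLinearMap.smulRight_apply] at h2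
      rcases smul_eq_zero.1 h2 with h' | h'
      · rw [hgf] at h'; exact hx1 h'
      · exact hy₀ h'
    refine not_extreme_of_orth hpX hpY T hT D hD0 ?_ hext
    intro x hx f hf
    have hx0 : f0 x = 0 := by
      have h3 : f0 x ∈ (Submodule.span ℝ R).map f0 :=
        Submodule.mem_map_of_mem (Submodule.subset_span hx.1)
      rw [hmap] at h3; simpa using h3
    rw [hDdef]
    simp only [ContinuousLinearMap.smulRight_apply]
    rw [map_smul, hgf, hx0]
    simp
  -- Step 2 : span (suppOfImage) = ⊤
  have hspanW : Submodule.span ℝ (suppOfImage ℝ T R) = ⊤ := by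
    by_contra hne
    set W := Submodule.span ℝ (suppOfImage ℝ T R) with hWdef
    have hWlt : W < ⊤ := lt_top_iff_ne_top.2 hne
    set ev : Y →ₗ[ℝ] (↥W →ₗ[ℝ] ℝ) :=
      { toFun := fun y =>
          { toFun := fun f => (f : StrongDual ℝ Y) y
            map_add' := fun f g => rfl
            map_smul' := fun c f => rfl }
        map_add' := fun y z => LinearMap.ext fun f => map_add (f : StrongDual ℝ Y) y z
        map_smul' := fun c y => LinearMap.ext fun f =>
          map_smul (f : StrongDual ℝ Y) c y } with hevdef
    have hker : LinearMap.ker ev ≠ ⊥ := by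
      intro hk
      have hinj : Function.Injective ev := LinearMap.ker_eq_bot.1 hk
      have h1 : Module.finrank ℝ Y ≤ Module.finrank ℝ (↥W →ₗ[ℝ] ℝ) :=
        LinearMap.finrank_le_finrank_of_injective hinj
      have h2 : Module.finrank ℝ (↥W →ₗ[ℝ] ℝ) = Module.finrank ℝ ↥W :=
        Subspace.dual_finrank_eq
      have h3 : Module.finrank ℝ ↥W < Module.finrank ℝ (StrongDual ℝ Y) :=
        Submodule.finrank_lt hWlt.ne
      rw [finrank_dual_eq (Y := Y)] at h3
      omega
    obtain ⟨y₀, hy₀mem, hy₀⟩ := (Submodule.ne_bot_iff _).1 hker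
    have hy₀W : ∀ f ∈ W, (f : StrongDual ℝ Y) y₀ = 0 := by
      intro f hf
      have h4 : ev y₀ = 0 := LinearMap.mem_ker.1 hy₀mem
      have h5 := LinearMap.congr_fun h4 ⟨f, hf⟩
      simpa [hevdef] using h5
    obtain ⟨g0, hg0n, hg0x⟩ := exists_dual_vector ℝ x₀ (norm_ne_zero_iff.2 hx₀0)
    set D : X →L[ℝ] Y := g0.smulRight y₀ with hDdef
    have hD0 : D ≠ 0 := by
      intro h
      have h2 : D x₀ = 0 := by rw [h]; rfl
      rw [hDdef] at h2
      simp only [ContinuousLinearMap.smulRight_apply] at h2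
      rcases smul_eq_zero.1 h2 with h' | h'
      · rw [hg0x] at h'; exact hx₀0 (norm_eq_zero.1 h')
      · exact hy₀ h'
    refine not_extreme_of_orth hpX hpY T hT D hD0 ?_ hext
    intro x hx f hf
    have hfW : f ∈ W := Submodule.subset_span ⟨x, hx, hf.1⟩
    rw [hDdef]
    simp only [ContinuousLinearMap.smulRight_apply]
    rw [map_smul, hy₀W f hfW]
    simp
  -- Step 3 : arbitrary bases
  intro nv p v w hv hw
  have hvtop : Submodule.span ℝ (Set.range v) = ⊤ := by rw [hv.2, hspanR]
  have hwtop : Submodule.span ℝ (Set.range w) = ⊤ := by rw [hw.2, hspanW]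
  let Bv : Module.Basis (Fin nv) ℝ X := Module.Basis.mk hv.1 (by rw [hvtop])
  let Bw : Module.Basis (Fin p) ℝ (StrongDual ℝ Y) := Module.Basis.mk hw.1 (by rw [hwtop])
  have hBv : ∀ i, Bv i = v i := fun i => Module.Basis.mk_apply hv.1 _ i
  have hBw : ∀ j, Bw j = w j := fun j => Module.Basis.mk_apply hw.1 _ j
  have hnv : nv = m := by
    rw [← hdimX, Module.finrank_eq_card_basis Bv, Fintype.card_fin]
  have hp : p = n := by
    rw [← hdimY, ← finrank_dual_eq (Y := Y), Module.finrank_eq_card_basis Bw, Fintype.card_fin]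
  set Z := indexSubspace ℝ T R v w with hZdef
  have hZtop : Z = ⊤ := by
    by_contra hne
    obtain ⟨φ, hφ0, hφmap⟩ := Submodule.exists_dual_map_eq_bot_of_lt_top
      (lt_top_iff_ne_top.2 hne) inferInstance
    have hφz : ∀ z ∈ Z, φ z = 0 := fun z hz => by
      have h3 : φ z ∈ Z.map φ := Submodule.mem_map_of_mem hz
      rw [hφmap] at h3; simpa using h3
    set c : Fin nv × Fin p → ℝ := fun ij => φ (Pi.single ij 1) with hcdef
    have hφeq : ∀ z : Fin nv × Fin p → ℝ, φ z = ∑ ij, z ij * c ij := by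
      intro z
      have hrep : z = ∑ ij : Fin nv × Fin p, z ij • (Pi.single ij (1:ℝ) : Fin nv × Fin p → ℝ) := by
        ext kl
        rw [Finset.sum_apply]
        rw [Finset.sum_eq_single kl]
        · simp
        · intro ij _ hij
          simp [Pi.single_apply, Ne.symm hij]
        · intro h; exact absurd (Finset.mem_univ _) h
      calc φ z = φ (∑ ij : Fin nv × Fin p, z ij • (Pi.single ij (1:ℝ) : Fin nv × Fin p → ℝ)) := by
            rw [← hrep]
      _ = ∑ ij : Fin nv × Fin p, z ij * c ij := by
          rw [map_sum]
          exact Finset.sum_congr rfl fun ij _ => by rw [map_smul, smul_eq_mul, hcdef]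
    have hc0 : c ≠ 0 := by
      intro h
      apply hφ0
      refine LinearMap.ext fun z => ?_
      rw [hφeq z, h]
      simp
    -- dual basis u of w
    set ψ : Y →ₗ[ℝ] (Fin p → ℝ) :=
      { toFun := fun y j => w j y
        map_add' := fun y z => by ext j; simp
        map_smul' := fun t y => by ext j; simp } with hψdef
    have hψinj : Function.Injective ψ := by
      rw [← LinearMap.ker_eq_bot]
      refine (Submodule.eq_bot_iff _).2 fun y hy => ?_
      have hyz : ∀ j, w j y = 0 := fun j => by
        have := LinearMap.mem_ker.1 hy
        have h5 := congrFun (show ψ y = 0 from this) j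
        simpa [hψdef] using h5
      refine eq_zero_of_forall_dual y fun f => ?_
      refine span_eval_zero (s := Set.range w) ?_ f (by rw [hwtop]; trivial)
      rintro g ⟨j, rfl⟩
      exact hyz j
    have hψsurj : Function.Surjective ψ :=
      (LinearMap.injective_iff_surjective_of_finrank_eq_finrank
        (by rw [hdimY, Module.finrank_pi, Fintype.card_fin, hp])).1 hψinj
    choose u hu using fun j => hψsurj (Pi.single j 1)
    have hwu : ∀ j j', w j ((u j') : Y) = if j = j' then (1:ℝ) else 0 := by
      intro j j'
      have h6 := congrFun (hu j') j
      rw [Pi.single_apply] at h6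
      exact h6
    set D0 : X →ₗ[ℝ] Y :=
      ∑ ij : Fin nv × Fin p, c ij • ((Bv.coord ij.1).smulRight (u ij.2)) with hD0def
    set D : X →L[ℝ] Y := LinearMap.toContinuousLinearMap D0 with hDdef
    have hDapp : ∀ x : X, D x = D0 x := fun x => rfl
    have hDvi : ∀ i j, w j (D (v i)) = c (i, j) := by
      intro i j
      rw [hDapp, hD0def]
      simp only [LinearMap.sum_apply, LinearMap.smul_apply, LinearMap.smulRight_apply]
      have hcoord : ∀ kl : Fin nv × Fin p,
          Bv.coord kl.1 (v i) = if i = kl.1 then (1:ℝ) else 0 := by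
        intro kl
        rw [← hBv i, Module.Basis.coord_apply, Module.Basis.repr_self, Finsupp.single_apply]
      rw [map_sum]
      rw [Finset.sum_eq_single (i, j)]
      · rw [map_smul, hcoord (i, j), map_smul, hwu]
        simp
      · intro kl _ hkl
        rw [map_smul, hcoord kl, map_smul, hwu]
        by_cases h7 : i = kl.1
        · have h8 : j ≠ kl.2 := fun h9 => hkl (Prod.ext h7.symm h9.symm)
          simp [if_neg h8]
        · simp [if_neg h7]
      · intro h; exact absurd (Finset.mem_univ _) h
    have hD0ne : D ≠ 0 := by
      obtain ⟨ij0, hij0⟩ : ∃ ij, c ij ≠ 0 := by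
        by_contra h; push_neg at h; exact hc0 (funext h)
      intro h
      have h2 : w ij0.2 (D (v ij0.1)) = 0 := by rw [h]; simp
      rw [hDvi ij0.1 ij0.2] at h2
      exact hij0 (by rwa [Prod.mk.eta] at h2)
    refine not_extreme_of_orth hpX hpY T hT D hD0ne ?_ hext
    intro x hx f hf
    have hxsum : ∑ i, Bv.repr x i • v i = x := by
      have h10 := Bv.sum_repr x
      calc ∑ i, Bv.repr x i • v i = ∑ i, Bv.repr x i • Bv i := by
            exact Finset.sum_congr rfl fun i _ => by rw [hBv]
      _ = x := h10
    have hfsum : ∑ j, Bw.repr f j • w j = f := by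
      have h10 := Bw.sum_repr f
      calc ∑ j, Bw.repr f j • w j = ∑ j, Bw.repr f j • Bw j := by
            exact Finset.sum_congr rfl fun j _ => by rw [hBw]
      _ = f := h10
    have hgen : (fun ij : Fin nv × Fin p => Bv.repr x ij.1 * Bw.repr f ij.2) ∈ Z := by
      rw [hZdef, indexSubspace]
      refine Submodule.subset_span ⟨fun i => Bv.repr x i, fun j => Bw.repr f j, ?_, ?_, rfl⟩
      · rw [hxsum]; exact hx
      · rw [hfsum, hxsum]; exact hf
    calc f (D x) = (∑ j, Bw.repr f j • w j) (D (∑ i, Bv.repr x i • v i)) := by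
          rw [hxsum, hfsum]
    _ = ∑ ij : Fin nv × Fin p,
          (Bv.repr x ij.1 * Bw.repr f ij.2) * (w ij.2 (D (v ij.1))) := pairing_sum v w D _ _
    _ = ∑ ij : Fin nv × Fin p,
          (Bv.repr x ij.1 * Bw.repr f ij.2) * c ij := by
          refine Finset.sum_congr rfl fun ij _ => ?_
          rw [hDvi ij.1 ij.2]
    _ = φ (fun ij : Fin nv × Fin p => Bv.repr x ij.1 * Bw.repr f ij.2) := (hφeq _).symm
    _ = 0 := hφz _ hgen
  rw [hZtop, finrank_top, Module.finrank_pi]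
  simp [hnv, hp]

end DirB

end AuxProof

theorem extreme_contraction_iff_index_polyhedral
    {X Y : Type*}
    [NormedAddCommGroup X] [NormedSpace ℝ X] [FiniteDimensional ℝ X]
    [NormedAddCommGroup Y] [NormedSpace ℝ Y] [FiniteDimensional ℝ Y]
    (hpolyX : PolyhedralSp X) (hpolyY : PolyhedralSp Y)
    {m n : ℕ} (hdimX : Module.finrank ℝ X = m) (hdimY : Module.finrank ℝ Y = n)
    (T : X →L[ℝ] Y) (hT : ‖T‖ = 1) :
    T ∈ ExtremePts ℝ (closedBall (0 : X →L[ℝ] Y) 1) ↔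
      HasIndexOfSmoothness ℝ T (normAttainSet ℝ T) (m * n) := by
  have hpX : ((closedBall (0:X) 1).extremePoints ℝ).Finite := by
    have h : (ExtremePts ℝ (closedBall (0:X) 1)).Finite := hpolyX
    rwa [extremePts_eq] at h
  have hpY : ((closedBall (0:Y) 1).extremePoints ℝ).Finite := by
    have h : (ExtremePts ℝ (closedBall (0:Y) 1)).Finite := hpolyY
    rwa [extremePts_eq] at h
  constructor
  · exact index_of_extreme hpX hpY hdimX hdimY T hT
  · exact extreme_of_index hdimX hdimY T hT
end

section
/- Let X be a smooth Banach space over K (ℝ or ℂ) and let Y be an n-dimensional subspace of X. Then Y is coproximinal in X if and only if the linear span of {y* ∈ X* : ‖y*‖ = 1 and y* ∈ J(y) for some y ∈ Y with ‖y‖ = 1} has dimension n. -/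
open Metric Set
open scoped ENNReal

section CoproxAux

variable {𝕜 X : Type*} [RCLike 𝕜] [NormedAddCommGroup X] [NormedSpace 𝕜 X]

lemma exists_supp_vanishing' [CompleteSpace X] (v u : X) (hv : ‖v‖ = 1)
    (hBJ : ∀ c : 𝕜, 1 ≤ ‖v + c • u‖) :
    ∃ f : StrongDual 𝕜 X, ‖f‖ = 1 ∧ f v = 1 ∧ f u = 0 := by
  set U : Submodule 𝕜 X := Submodule.span 𝕜 {u} with hU
  haveI : FiniteDimensional 𝕜 U := FiniteDimensional.span_singleton (K := 𝕜) u
  haveI : IsClosed (U : Set X) := Submodule.closed_of_finiteDimensional U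
  have hge : (1 : ℝ) ≤ ‖(Submodule.Quotient.mk v : X ⧸ U)‖ := by
    by_contra hlt
    push_neg at hlt
    obtain ⟨m, hm, hmlt⟩ := Submodule.Quotient.norm_mk_lt
      (Submodule.Quotient.mk v : X ⧸ U) (sub_pos.mpr hlt)
    have hmem : v - m ∈ U := by
      have : m - v ∈ U := (Submodule.Quotient.eq U).mp hm
      simpa using U.neg_mem this
    obtain ⟨a, ha⟩ := Submodule.mem_span_singleton.mp hmem
    have : v + (-a) • u = m := by
      rw [neg_smul, ha]; abel
    have h1 := hBJ (-a)
    rw [this] at h1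
    linarith
  have hle : ‖(Submodule.Quotient.mk v : X ⧸ U)‖ ≤ 1 := by
    simpa [hv] using Submodule.Quotient.norm_mk_le U v
  have hnorm : ‖(Submodule.Quotient.mk v : X ⧸ U)‖ = 1 := le_antisymm hle hge
  have hne : (Submodule.Quotient.mk v : X ⧸ U) ≠ 0 := by
    intro h; rw [h, norm_zero] at hnorm; linarith
  obtain ⟨g, hg1, hg2⟩ := exists_dual_vector 𝕜 (Submodule.Quotient.mk v : X ⧸ U) (norm_ne_zero_iff.mpr hne)
  have hmkcont : ∀ x : X, ‖g (Submodule.Quotient.mk x)‖ ≤ 1 * ‖x‖ := fun x => by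
    calc ‖g (Submodule.Quotient.mk x)‖ ≤ ‖g‖ * ‖(Submodule.Quotient.mk x : X ⧸ U)‖ :=
          g.le_opNorm _
      _ ≤ 1 * ‖x‖ := by
          rw [hg1]; exact mul_le_mul_of_nonneg_left (Submodule.Quotient.norm_mk_le U x)
            zero_le_one
  set f : StrongDual 𝕜 X :=
    LinearMap.mkContinuous (g.toLinearMap.comp U.mkQ) 1 hmkcont with hf
  have hfv : f v = 1 := by
    show g (Submodule.Quotient.mk v) = 1
    rw [hg2, hnorm, RCLike.ofReal_one]
  have hfu : f u = 0 := by
    show g (Submodule.Quotient.mk u) = 0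
    have : (Submodule.Quotient.mk u : X ⧸ U) = 0 :=
      (Submodule.Quotient.mk_eq_zero U).mpr (Submodule.mem_span_singleton_self u)
    rw [this, map_zero]
  refine ⟨f, le_antisymm (LinearMap.mkContinuous_norm_le _ zero_le_one _) ?_, hfv, hfu⟩
  have := f.le_opNorm v
  rw [hfv, hv, mul_one] at this
  simpa using this

lemma supp_vanishing_of_smooth' [CompleteSpace X] (hXsm : SmoothSp 𝕜 X) {v u : X}
    (hv : ‖v‖ = 1) (hBJ : ∀ c : 𝕜, 1 ≤ ‖v + c • u‖)
    {f : StrongDual 𝕜 X} (hf : f ∈ suppFunctionals 𝕜 v) : f u = 0 := by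
  obtain ⟨f₀, h1, h2, h3⟩ := exists_supp_vanishing' v u hv hBJ
  obtain ⟨g, hg⟩ := hXsm v hv
  have e1 : f = g := by rw [hg] at hf; exact hf
  have e2 : f₀ = g := by
    have : f₀ ∈ suppFunctionals 𝕜 v := ⟨h1, h2⟩
    rw [hg] at this; exact this
  rw [e1, ← e2]; exact h3

lemma exists_dual_in_S' (V : Submodule 𝕜 X) {v : X} (hvV : v ∈ V) (hne : v ≠ 0) :
    ∃ g : StrongDual 𝕜 X,
      (‖g‖ = 1 ∧ ∃ y ∈ V, ‖y‖ = 1 ∧ g ∈ suppFunctionals 𝕜 y) ∧ g v = (‖v‖ : 𝕜) := by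
  obtain ⟨g, hg1, hg2⟩ := exists_dual_vector 𝕜 v (norm_ne_zero_iff.mpr hne)
  have hnv : ‖v‖ ≠ 0 := norm_ne_zero_iff.mpr hne
  refine ⟨g, ⟨hg1, ((‖v‖⁻¹ : ℝ) : 𝕜) • v, V.smul_mem _ hvV, ?_, hg1, ?_⟩, hg2⟩
  · rw [norm_smul, RCLike.norm_ofReal, abs_of_nonneg (inv_nonneg.mpr (norm_nonneg v)),
      inv_mul_cancel₀ hnv]
  · rw [map_smul, smul_eq_mul, hg2, ← RCLike.ofReal_mul, inv_mul_cancel₀ hnv,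
      RCLike.ofReal_one]


/-- The evaluation pairing `V →ₗ Dual W` between a subspace and a subspace of the dual. -/
def coproxPair (V : Submodule 𝕜 X) (W : Submodule 𝕜 (StrongDual 𝕜 X)) :
    V →ₗ[𝕜] Module.Dual 𝕜 ↥W where
  toFun v :=
    { toFun := fun f => (f : StrongDual 𝕜 X) (v : X)
      map_add' := fun f g => by simp
      map_smul' := fun c f => by simp }
  map_add' := fun v w => by ext f; simp
  map_smul' := fun c v => by ext f; simp

@[simp] lemma coproxPair_apply (V : Submodule 𝕜 X) (W : Submodule 𝕜 (StrongDual 𝕜 X))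
    (v : V) (f : W) : coproxPair V W v f = (f : StrongDual 𝕜 X) (v : X) := rfl

/-- The restriction map `W →ₗ Dual V`. -/
def coproxRestrict (V : Submodule 𝕜 X) (W : Submodule 𝕜 (StrongDual 𝕜 X)) :
    ↥W →ₗ[𝕜] Module.Dual 𝕜 V where
  toFun f :=
    { toFun := fun v => (f : StrongDual 𝕜 X) (v : X)
      map_add' := fun v w => by simp
      map_smul' := fun c v => by simp }
  map_add' := fun f g => by ext v; simp
  map_smul' := fun c f => by ext v; simp

@[simp] lemma coproxRestrict_apply (V : Submodule 𝕜 X) (W : Submodule 𝕜 (StrongDual 𝕜 X))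
    (f : W) (v : V) : coproxRestrict V W f v = (f : StrongDual 𝕜 X) (v : X) := rfl

/-- Evaluation at a point `x : X` as an element of `Dual W`. -/
def coproxEval (W : Submodule 𝕜 (StrongDual 𝕜 X)) (x : X) : Module.Dual 𝕜 ↥W where
  toFun f := (f : StrongDual 𝕜 X) x
  map_add' := fun f g => by simp
  map_smul' := fun c f => by simp

@[simp] lemma coproxEval_apply (W : Submodule 𝕜 (StrongDual 𝕜 X)) (x : X) (f : W) :
    coproxEval W x f = (f : StrongDual 𝕜 X) x := rfl

end CoproxAux

theorem coproximinal_iff_span_suppFunctionals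
    {𝕜 X : Type*} [RCLike 𝕜]
    [NormedAddCommGroup X] [NormedSpace 𝕜 X] [CompleteSpace X]
    (hXsm : SmoothSp 𝕜 X)
    (V : Submodule 𝕜 X) [FiniteDimensional 𝕜 V] {n : ℕ}
    (hdim : Module.finrank 𝕜 V = n) :
    Coproximinal 𝕜 V ↔
      Module.rank 𝕜 ↥(Submodule.span 𝕜
        {f : StrongDual 𝕜 X | ‖f‖ = 1 ∧ ∃ y ∈ V, ‖y‖ = 1 ∧ f ∈ suppFunctionals 𝕜 y})
        = n := by
    classical
  set S : Set (StrongDual 𝕜 X) :=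
    {f : StrongDual 𝕜 X | ‖f‖ = 1 ∧ ∃ y ∈ V, ‖y‖ = 1 ∧ f ∈ suppFunctionals 𝕜 y}
    with hS
  set W : Submodule 𝕜 (StrongDual 𝕜 X) := Submodule.span 𝕜 S with hW
  have hjinj : Function.Injective (coproxPair V W) := by
    rw [← LinearMap.ker_eq_bot, Submodule.eq_bot_iff]
    intro v hv
    rw [LinearMap.mem_ker] at hv
    by_contra hvne
    have hvne' : (v : X) ≠ 0 := fun h => hvne (Subtype.ext h)
    obtain ⟨g, hgS, hgv⟩ := exists_dual_in_S' V v.2 hvne'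
    have hgW : g ∈ W := Submodule.subset_span hgS
    have hzero : g (v : X) = 0 := by
      have h' : coproxPair V W v ⟨g, hgW⟩ = 0 := by rw [hv]; rfl
      simpa using h'
    rw [hgv] at hzero
    exact norm_ne_zero_iff.mpr hvne' (by exact_mod_cast hzero)
  constructor
  · -- coproximinal → rank = n
    intro hco
    have key : ∀ x : X, ∃ y₀ ∈ V, ∀ f ∈ S, f x = f y₀ := by
      intro x
      obtain ⟨y₀, hy₀V, hle⟩ := hco x
      refine ⟨y₀, hy₀V, ?_⟩
      rintro f ⟨hfn, y, hyV, hy1, hfy⟩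
      have hBJ : ∀ c : 𝕜, 1 ≤ ‖y + c • (x - y₀)‖ := by
        intro c
        rcases eq_or_ne c 0 with rfl | hc
        · simp [hy1]
        · have hz := hle (y₀ - c⁻¹ • y) (V.sub_mem hy₀V (V.smul_mem _ hyV))
          have e1 : y₀ - (y₀ - c⁻¹ • y) = c⁻¹ • y := by abel
          have e2 : x - (y₀ - c⁻¹ • y) = c⁻¹ • (y + c • (x - y₀)) := by
            rw [smul_add, smul_smul, inv_mul_cancel₀ hc, one_smul]
            abel
          rw [e1, e2, norm_smul, norm_smul, hy1, mul_one] at hz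
          have hcpos : 0 < ‖c⁻¹‖ := by
            rw [norm_pos_iff]; exact inv_ne_zero hc
          calc (1 : ℝ) = ‖c⁻¹‖⁻¹ * ‖c⁻¹‖ := (inv_mul_cancel₀ hcpos.ne').symm
            _ ≤ ‖c⁻¹‖⁻¹ * (‖c⁻¹‖ * ‖y + c • (x - y₀)‖) := by
                rw [mul_le_mul_iff_of_pos_left (inv_pos.mpr hcpos)]; exact hz
            _ = ‖y + c • (x - y₀)‖ := by
                rw [← mul_assoc, inv_mul_cancel₀ hcpos.ne', one_mul]
      have h0 : f (x - y₀) = 0 := supp_vanishing_of_smooth' hXsm hy1 hBJ hfy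
      have hsub : f x - f y₀ = 0 := by rw [← map_sub, h0]
      exact sub_eq_zero.mp hsub
    have hρinj : Function.Injective (coproxRestrict V W) := by
      rw [← LinearMap.ker_eq_bot (M := ↥W), Submodule.eq_bot_iff]
      intro f hfker
      rw [LinearMap.mem_ker] at hfker
      apply Subtype.ext
      apply ContinuousLinearMap.ext
      intro x
      obtain ⟨y₀, hy₀V, hkey⟩ := key x
      have hfx : (f : StrongDual 𝕜 X) x = (f : StrongDual 𝕜 X) y₀ := by
        refine Submodule.span_induction
          (p := fun g _ => g x = g y₀) (fun g hg => hkey g hg) (by simp)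
          (fun a b _ _ ha hb => by
            simp only [ContinuousLinearMap.add_apply]; rw [ha, hb])
          (fun c a _ ha => by
            simp only [ContinuousLinearMap.coe_smul', Pi.smul_apply]; rw [ha]) f.2
      have hfy₀ : (f : StrongDual 𝕜 X) y₀ = 0 := by
        have h' := LinearMap.congr_fun hfker (⟨y₀, hy₀V⟩ : V)
        simpa using h'
      simp [hfx, hfy₀]
    haveI : FiniteDimensional 𝕜 ↥W := FiniteDimensional.of_injective _ hρinj
    have h1 : Module.finrank 𝕜 ↥W ≤ n := by
      have h := LinearMap.finrank_le_finrank_of_injective hρinj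
      rwa [Subspace.dual_finrank_eq, hdim] at h
    haveI : Module.Free 𝕜 ↥W := Module.Free.of_divisionRing 𝕜 ↥W
    have h2 : n ≤ Module.finrank 𝕜 ↥W := by
      have h := LinearMap.finrank_le_finrank_of_injective hjinj
      rwa [Subspace.dual_finrank_eq (V := ↥W), hdim] at h
    have h3 : Module.finrank 𝕜 ↥W = n := le_antisymm h1 h2
    rw [← Module.finrank_eq_rank, h3]
  · -- rank = n → coproximinal
    intro hr
    haveI : Module.Free 𝕜 ↥W := Module.Free.of_divisionRing 𝕜 ↥W
    haveI : FiniteDimensional 𝕜 ↥W := Module.finite_of_rank_eq_nat hr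
    have hfr : Module.finrank 𝕜 ↥W = n := by
      have h := Module.finrank_eq_rank 𝕜 ↥W
      rw [hr] at h
      exact_mod_cast h
    have hjsurj : Function.Surjective (coproxPair V W) := by
      have heq : Module.finrank 𝕜 V = Module.finrank 𝕜 (Module.Dual 𝕜 ↥W) := by
        rw [Subspace.dual_finrank_eq (V := ↥W), hfr, hdim]
      exact (LinearMap.injective_iff_surjective_of_finrank_eq_finrank heq).mp hjinj
    intro x
    obtain ⟨y₀, hy₀⟩ := hjsurj (coproxEval W x)
    refine ⟨(y₀ : X), y₀.2, ?_⟩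
    intro z hzV
    rcases eq_or_ne ((y₀ : X) - z) 0 with h0 | hne0
    · rw [h0, norm_zero]
      exact norm_nonneg _
    · obtain ⟨g, hgS, hgv⟩ := exists_dual_in_S' V (V.sub_mem y₀.2 hzV) hne0
      have hgW : g ∈ W := Submodule.subset_span hgS
      have hgx : g (y₀ : X) = g x := by
        have h' := LinearMap.congr_fun hy₀ (⟨g, hgW⟩ : W)
        simpa using h'
      have hgxz : g (x - z) = (‖(y₀ : X) - z‖ : 𝕜) := by
        rw [map_sub, ← hgx, ← map_sub, hgv]
      have hg1 : ‖g‖ = 1 := hgS.1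
      calc ‖(y₀ : X) - z‖ = ‖g (x - z)‖ := by
            rw [hgxz, RCLike.norm_ofReal, abs_norm]
        _ ≤ ‖g‖ * ‖x - z‖ := g.le_opNorm _
        _ = ‖x - z‖ := by rw [hg1, one_mul]
end

section
/- Let X and Y be strictly convex, smooth, reflexive Banach spaces over the same field K (ℝ or ℂ). Let T ∈ L(X,Y) with ‖T‖ = 1, suppose the subspace K(X,Y) of compact operators is an M-ideal in L(X,Y), and dist(T, K(X,Y)) < 1. Suppose M_T is the unit sphere of an n-dimensional subspace X₀ of X, T(X₀) is a coproximinal subspace of Y, and T(X₀) has a strong Auerbach basis. Then T is at least (n+1 choose 2)-smooth, i.e., the dimension of the linear span of J(T) is at least n(n+1)/2. -/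
open Metric Set
open scoped ENNReal

section AuxLemmas

open Metric Set

/-- Norming functional vanishing on a finite-dimensional subspace at Birkhoff-James
orthogonal distance. -/
theorem exists_norming_dual_vanishing {𝕜 Y : Type*} [RCLike 𝕜] [NormedAddCommGroup Y]
    [NormedSpace 𝕜 Y] (V : Submodule 𝕜 Y) [FiniteDimensional 𝕜 V]
    (w : Y) (hw : w ≠ 0) (hBJ : ∀ v ∈ V, ‖w‖ ≤ ‖w + v‖) :
    ∃ f : StrongDual 𝕜 Y, ‖f‖ = 1 ∧ f w = (‖w‖ : 𝕜) ∧ ∀ v ∈ V, f v = 0 := by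
  haveI : IsClosed (V : Set Y) := Submodule.closed_of_finiteDimensional V
  have hnorm : ‖(Submodule.Quotient.mk w : Y ⧸ V)‖ = ‖w‖ := by
    refine le_antisymm (Submodule.Quotient.norm_mk_le V w) ?_
    by_contra h
    push_neg at h
    obtain ⟨s, hs, hlt⟩ := QuotientAddGroup.exists_norm_add_lt V.toAddSubgroup w
      (ε := ‖w‖ - ‖(Submodule.Quotient.mk w : Y ⧸ V)‖) (by linarith)
    have : ‖w‖ ≤ ‖w + s‖ := hBJ s hs
    have h2 : ‖QuotientAddGroup.mk' V.toAddSubgroup w‖ =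
        ‖(Submodule.Quotient.mk w : Y ⧸ V)‖ := rfl
    rw [h2] at hlt
    linarith
  have hne : (Submodule.Quotient.mk w : Y ⧸ V) ≠ 0 := by
    intro h
    rw [h, norm_zero] at hnorm
    exact hw (norm_eq_zero.mp hnorm.symm)
  obtain ⟨g, hg1, hg2⟩ := exists_dual_vector 𝕜 _ (norm_ne_zero_iff.mpr hne)
  set flin : Y →ₗ[𝕜] 𝕜 := g.toLinearMap ∘ₗ V.mkQ with hflin
  have hbound : ∀ y : Y, ‖flin y‖ ≤ 1 * ‖y‖ := by
    intro y
    have : flin y = g (Submodule.Quotient.mk y) := rfl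
    rw [this, one_mul]
    calc ‖g (Submodule.Quotient.mk y)‖ ≤ ‖g‖ * ‖(Submodule.Quotient.mk y : Y ⧸ V)‖ :=
          g.le_opNorm _
      _ = ‖(Submodule.Quotient.mk y : Y ⧸ V)‖ := by rw [hg1, one_mul]
      _ ≤ ‖y‖ := Submodule.Quotient.norm_mk_le V y
  refine ⟨flin.mkContinuous 1 hbound, ?_, ?_, ?_⟩
  · refine le_antisymm (flin.mkContinuous_norm_le zero_le_one hbound) ?_
    have hval : (flin.mkContinuous 1 hbound) w = (‖w‖ : 𝕜) := by
      show g (Submodule.Quotient.mk w) = _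
      rw [hg2, hnorm]
    have := (flin.mkContinuous 1 hbound).le_opNorm w
    rw [hval] at this
    have hww : (0:ℝ) < ‖w‖ := norm_pos_iff.mpr hw
    have : ‖(‖w‖ : 𝕜)‖ = ‖w‖ := by
      rw [RCLike.norm_ofReal, abs_of_nonneg (norm_nonneg w)]
    nlinarith [(flin.mkContinuous 1 hbound).le_opNorm w, hval]
  · show g (Submodule.Quotient.mk w) = _
    rw [hg2, hnorm]
  · intro v hv
    show g (Submodule.Quotient.mk v) = 0
    rw [(Submodule.Quotient.mk_eq_zero V).mpr hv, map_zero]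

/-- In a strictly convex space, a support functional of `a + b` cannot vanish at `b`
when `a ⊥_B b` and `a`, `b` are unit vectors. -/
theorem aux_nonzero {𝕜 Y : Type*} [RCLike 𝕜] [NormedAddCommGroup Y] [NormedSpace 𝕜 Y]
    (hYsc : StrictlyConvexSp 𝕜 Y) (a b : Y) (ha : ‖a‖ = 1) (hb : ‖b‖ = 1)
    (hBJ : ∀ c : 𝕜, ‖a‖ ≤ ‖a + c • b‖) (g : StrongDual 𝕜 Y)
    (hg1 : ‖g‖ = 1) (hg2 : g (a + b) = (‖a + b‖ : 𝕜)) : g b ≠ 0 := by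
  intro hgb
  set ν : ℝ := ‖a + b‖ with hν
  have hga : g a = (ν : 𝕜) := by
    have := hg2
    rw [map_add, hgb, add_zero] at this
    exact this
  have hν1 : 1 ≤ ν := by
    have := hBJ 1
    rwa [one_smul, ha] at this
  have hνle : ν ≤ 1 := by
    have h1 : ‖g a‖ ≤ ‖g‖ * ‖a‖ := g.le_opNorm a
    rw [hga, hg1, ha, one_mul] at h1
    rwa [RCLike.norm_ofReal, abs_of_nonneg (by linarith)] at h1
  have hνeq : ν = 1 := le_antisymm hνle hν1
  set z : Y := ((1 - (1/2 : ℝ) : ℝ) : 𝕜) • a + (((1/2 : ℝ) : ℝ) : 𝕜) • (a + b) with hz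
  have hgz : g z = 1 := by
    rw [hz, map_add, map_smul, map_smul, hga, hg2, hνeq]
    push_cast [smul_eq_mul]
    ring
  have hz1 : ‖z‖ = 1 := by
    refine le_antisymm ?_ ?_
    · calc ‖z‖ ≤ ‖((1 - (1/2:ℝ):ℝ):𝕜) • a‖ + ‖(((1/2:ℝ):ℝ):𝕜) • (a+b)‖ := norm_add_le _ _
        _ = (1/2) * ‖a‖ + (1/2) * ‖a + b‖ := by
            rw [norm_smul, norm_smul, RCLike.norm_ofReal, RCLike.norm_ofReal]
            norm_num [abs_of_nonneg]
        _ = 1 := by rw [ha, show ‖a + b‖ = ν from hν.symm, hνeq]; norm_num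
    · have h1 : ‖g z‖ ≤ ‖g‖ * ‖z‖ := g.le_opNorm z
      rw [hgz, hg1, one_mul, norm_one] at h1
      exact h1
  have hmem : ∀ y : Y, ‖y‖ = 1 → y ∈ closedBall (0 : Y) 1 := by
    intro y hy
    simp [mem_closedBall, dist_zero_right, hy]
  obtain ⟨-, hext⟩ := hYsc z hz1
  have hab : ‖a + b‖ = 1 := by rw [show ‖a + b‖ = ν from hν.symm, hνeq]
  have := hext a (hmem a ha) (a + b) (hmem _ hab) (1/2) (by norm_num) (by norm_num) rfl
  have hba : a + b = z := this.2
  have haz : a = z := this.1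
  have hb0 : b = 0 := by
    have : a + b = a := by rw [hba, ← haz]
    simpa using this
  rw [hb0, norm_zero] at hb
  exact absurd hb (by norm_num)

end AuxLemmas

theorem kSmooth_lower_bound_strong_auerbach
    {𝕜 X Y : Type*} [RCLike 𝕜]
    [NormedAddCommGroup X] [NormedSpace 𝕜 X] [CompleteSpace X]
    [NormedAddCommGroup Y] [NormedSpace 𝕜 Y] [CompleteSpace Y]
    (hXsc : StrictlyConvexSp 𝕜 X) (hXsm : SmoothSp 𝕜 X) (hXrefl : ReflexiveSp 𝕜 X)
    (hYsc : StrictlyConvexSp 𝕜 Y) (hYsm : SmoothSp 𝕜 Y) (hYrefl : ReflexiveSp 𝕜 Y)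
    (T : X →L[𝕜] Y) (hT : ‖T‖ = 1)
    (hMideal : IsMIdeal 𝕜 (compactOperators 𝕜 X Y))
    (hdist : Metric.infDist T (compactOperators 𝕜 X Y : Set (X →L[𝕜] Y)) < 1)
    (X₀ : Submodule 𝕜 X) [FiniteDimensional 𝕜 X₀] {n : ℕ}
    (hdim : Module.finrank 𝕜 X₀ = n)
    (hMT : normAttainSet 𝕜 T = {x : X | x ∈ X₀ ∧ ‖x‖ = 1})
    (hco : Coproximinal 𝕜 (X₀.map (T : X →ₗ[𝕜] Y)))
    (hauer : ∃ (d : ℕ) (u : Fin d → Y),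
      IsStrongAuerbachBasis 𝕜 u (X₀.map (T : X →ₗ[𝕜] Y))) :
    ((n + 1).choose 2 : Cardinal) ≤
      Module.rank 𝕜 ↥(Submodule.span 𝕜 (suppFunctionals 𝕜 T)) := by
  classical
  obtain ⟨d, u, huV, hunorm, huind, huspan, huBJ⟩ := hauer
  -- T is isometric on X₀
  have hiso : ∀ x ∈ X₀, ‖T x‖ = ‖x‖ := by
    intro x hx
    rcases eq_or_ne x 0 with rfl | hx0
    · simp
    · have hnx : (‖x‖ : ℝ) ≠ 0 := norm_ne_zero_iff.mpr hx0
      set x' : X := ((‖x‖⁻¹ : ℝ) : 𝕜) • x with hx'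
      have hx'mem : x' ∈ X₀ := X₀.smul_mem _ hx
      have hx'norm : ‖x'‖ = 1 := by
        rw [hx', norm_smul, RCLike.norm_ofReal, abs_of_nonneg (by positivity)]
        field_simp
      have : x' ∈ normAttainSet 𝕜 T := by
        rw [hMT]; exact ⟨hx'mem, hx'norm⟩
      have hTx' : ‖T x'‖ = 1 := by
        have h := this.2
        rwa [hT] at h
      have : T x' = ((‖x‖⁻¹ : ℝ) : 𝕜) • T x := by rw [hx', map_smul]
      rw [this, norm_smul, RCLike.norm_ofReal, abs_of_nonneg (by positivity)] at hTx'
      field_simp at hTx'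
      linarith [hTx']
  -- choose preimages of the Auerbach basis
  have hex : ∀ i : Fin d, ∃ z : X, z ∈ X₀ ∧ T z = u i := by
    intro i
    obtain ⟨z, hz, hz'⟩ := Submodule.mem_map.mp (huV i)
    exact ⟨z, hz, hz'⟩
  choose x hxmem hxeq using hex
  have hxnorm : ∀ i, ‖x i‖ = 1 := by
    intro i
    have := hiso (x i) (hxmem i)
    rw [hxeq i, hunorm i] at this
    exact this.symm
  have hxind : LinearIndependent 𝕜 x := by
    apply LinearIndependent.of_comp (T : X →ₗ[𝕜] Y)
    have : (T : X →ₗ[𝕜] Y) ∘ x = u := by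
      funext i
      exact hxeq i
    rw [this]
    exact huind
  -- BJ orthogonality between distinct basis vectors
  have hBJuu : ∀ i j : Fin d, i ≠ j → ∀ c : 𝕜, ‖u i‖ ≤ ‖u i + c • u j‖ := by
    intro i j hij c
    have ha : u i ∈ Submodule.span 𝕜 (u '' ({i} : Set (Fin d))) :=
      Submodule.subset_span (Set.mem_image_of_mem u rfl)
    have hb : u j ∈ Submodule.span 𝕜 (u '' ({i} : Set (Fin d))ᶜ) :=
      Submodule.subset_span (Set.mem_image_of_mem u (by simp [hij.symm]))
    exact huBJ {i} (u i) ha (u j) hb c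
  -- the index type of pairs
  set ι := {p : Fin d × Fin d // p.1 ≤ p.2} with hι
  -- the norms of u i + u j
  set ν : ι → ℝ := fun p => ‖u p.1.1 + u p.1.2‖ with hνdef
  have hdiagnorm : ∀ k : Fin d, ‖u k + u k‖ = 2 := by
    intro k
    rw [← two_smul 𝕜 (u k), norm_smul, hunorm k, mul_one]
    simp
  have hν1 : ∀ p : ι, 1 ≤ ν p := by
    intro p
    rcases eq_or_ne p.1.1 p.1.2 with he | hne
    · rw [hνdef]
      simp only [← he, hdiagnorm]
      norm_num
    · have := hBJuu p.1.1 p.1.2 hne 1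
      rw [one_smul, hunorm] at this
      exact this
  have hνpos : ∀ p : ι, (0:ℝ) < ν p := fun p => lt_of_lt_of_le one_pos (hν1 p)
  -- support functionals of u i + u j vanishing on the other basis vectors
  have hgex : ∀ p : ι, ∃ f : StrongDual 𝕜 Y, ‖f‖ = 1 ∧
      f (u p.1.1 + u p.1.2) = ((ν p : ℝ) : 𝕜) ∧
      ∀ v ∈ Submodule.span 𝕜 (u '' ({p.1.1, p.1.2} : Set (Fin d))ᶜ), f v = 0 := by
    intro p
    set V' := Submodule.span 𝕜 (u '' ({p.1.1, p.1.2} : Set (Fin d))ᶜ) with hV'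
    haveI : FiniteDimensional 𝕜 V' := FiniteDimensional.span_of_finite 𝕜 (Set.toFinite _)
    have hw0 : u p.1.1 + u p.1.2 ≠ 0 := by
      intro h
      have := hν1 p
      rw [hνdef] at this
      simp only [h, norm_zero] at this
      linarith
    have hwmem : u p.1.1 + u p.1.2 ∈
        Submodule.span 𝕜 (u '' ({p.1.1, p.1.2} : Set (Fin d))) := by
      refine Submodule.add_mem _ ?_ ?_
      · exact Submodule.subset_span (Set.mem_image_of_mem u (by simp))
      · exact Submodule.subset_span (Set.mem_image_of_mem u (by simp))
    have hBJ : ∀ v ∈ V', ‖u p.1.1 + u p.1.2‖ ≤ ‖u p.1.1 + u p.1.2 + v‖ := by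
      intro v hv
      have := huBJ ({p.1.1, p.1.2} : Set (Fin d)) _ hwmem v hv 1
      rwa [one_smul] at this
    exact exists_norming_dual_vanishing V' _ hw0 hBJ
  choose g hg1 hg2 hg0 using hgex
  have hgzero : ∀ p : ι, ∀ m : Fin d, m ≠ p.1.1 → m ≠ p.1.2 → g p (u m) = 0 := by
    intro p m h1 h2
    exact hg0 p (u m) (Submodule.subset_span (Set.mem_image_of_mem u (by simp [h1, h2])))
  have hgdiag : ∀ p : ι, p.1.1 = p.1.2 → g p (u p.1.1) = 1 := by
    intro p hd
    have h := hg2 p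
    rw [← hd, map_add] at h
    have hν2 : ν p = 2 := by rw [hνdef]; simp only [← hd]; exact hdiagnorm p.1.1
    rw [hν2] at h
    have h3 : (2:𝕜) * g p (u p.1.1) = 2 := by
      push_cast at h ⊢
      linear_combination h
    have h4 : (2:𝕜) * g p (u p.1.1) = (2:𝕜) * 1 := by rw [mul_one]; exact h3
    exact mul_left_cancel₀ two_ne_zero h4
  -- off-diagonal nonvanishing
  have hgne : ∀ p : ι, p.1.1 ≠ p.1.2 → g p (u p.1.1) ≠ 0 ∧ g p (u p.1.2) ≠ 0 := by
    intro p hne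
    constructor
    · have hBJ' : ∀ c : 𝕜, ‖u p.1.2‖ ≤ ‖u p.1.2 + c • u p.1.1‖ :=
        hBJuu p.1.2 p.1.1 (Ne.symm hne)
      have hBJ'' : ∀ c : 𝕜, 1 ≤ ‖u p.1.2 + c • u p.1.1‖ := by
        intro c; have := hBJ' c; rwa [hunorm] at this
      refine aux_nonzero hYsc (u p.1.2) (u p.1.1) (hunorm _) (hunorm _)
        (by intro c; rw [hunorm]; exact hBJ'' c) (g p) (hg1 p) ?_
      rw [add_comm (u p.1.2) (u p.1.1)]
      have := hg2 p
      rw [this, hνdef]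
    · refine aux_nonzero hYsc (u p.1.1) (u p.1.2) (hunorm _) (hunorm _)
        (by intro c; rw [hunorm]; have := hBJuu p.1.1 p.1.2 hne c; rwa [hunorm] at this)
        (g p) (hg1 p) ?_
      have := hg2 p
      rw [this, hνdef]
  -- normalized vectors in X₀
  set νk : ι → 𝕜 := fun p => (((ν p)⁻¹ : ℝ) : 𝕜) with hνk
  have hνkne : ∀ p : ι, νk p ≠ 0 := by
    intro p
    rw [hνk]
    simp only [ne_eq, RCLike.ofReal_eq_zero, inv_eq_zero]
    exact ne_of_gt (hνpos p)
  set xnorm : ι → X := fun p => νk p • (x p.1.1 + x p.1.2) with hxnormdef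
  have hxsum : ∀ p : ι, ‖x p.1.1 + x p.1.2‖ = ν p := by
    intro p
    have hmem : x p.1.1 + x p.1.2 ∈ X₀ := X₀.add_mem (hxmem _) (hxmem _)
    have := hiso _ hmem
    rw [map_add, hxeq, hxeq] at this
    rw [← this, hνdef]
  have hxnormnorm : ∀ p : ι, ‖xnorm p‖ = 1 := by
    intro p
    rw [hxnormdef]
    simp only
    rw [norm_smul, hxsum p, hνk]
    simp only [RCLike.norm_ofReal]
    rw [abs_of_nonneg (by positivity)]
    field_simp
    rw [div_self (ne_of_gt (hνpos p))]
  have hTxnorm : ∀ p : ι, T (xnorm p) = νk p • (u p.1.1 + u p.1.2) := by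
    intro p
    rw [hxnormdef]
    simp only [map_smul, map_add, hxeq]
  -- the functionals F p
  set F : ι → StrongDual 𝕜 (X →L[𝕜] Y) :=
    fun p => tensorFunctional 𝕜 (g p) (xnorm p) with hFdef
  have hFapply : ∀ (p : ι) (A : X →L[𝕜] Y), F p A = g p (A (xnorm p)) := by
    intro p A
    rfl
  have hFT : ∀ p : ι, F p T = 1 := by
    intro p
    rw [hFapply, hTxnorm, map_smul, hg2 p, hνk, smul_eq_mul]
    rw [← RCLike.ofReal_mul]
    rw [inv_mul_cancel₀ (ne_of_gt (hνpos p))]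
    simp
  have hFmem : ∀ p : ι, F p ∈ suppFunctionals 𝕜 T := by
    intro p
    refine ⟨?_, hFT p⟩
    refine le_antisymm ?_ ?_
    · refine ContinuousLinearMap.opNorm_le_bound _ zero_le_one ?_
      intro A
      rw [hFapply, one_mul]
      calc ‖g p (A (xnorm p))‖ ≤ ‖g p‖ * ‖A (xnorm p)‖ := (g p).le_opNorm _
        _ = ‖A (xnorm p)‖ := by rw [hg1 p, one_mul]
        _ ≤ ‖A‖ * ‖xnorm p‖ := A.le_opNorm _
        _ = ‖A‖ := by rw [hxnormnorm p, mul_one]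
    · have := (F p).le_opNorm T
      rw [hFT p, hT, mul_one, norm_one] at this
      exact this
  -- coefficients bc
  set bc : ι → Fin d → 𝕜 :=
    fun p k => (if p.1.1 = k then (1:𝕜) else 0) + (if p.1.2 = k then (1:𝕜) else 0) with hbc
  have hxsplit : ∀ p : ι, x p.1.1 + x p.1.2 = ∑ k, bc p k • x k := by
    intro p
    rw [hbc]
    simp only [add_smul, Finset.sum_add_distrib, ite_smul, one_smul, zero_smul]
    rw [Finset.sum_ite_eq, Finset.sum_ite_eq]
    simp
  -- linear independence of the F p
  have hFind : LinearIndependent 𝕜 F := by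
    rw [Fintype.linearIndependent_iff]
    intro c hc
    -- evaluate on rank one operators
    have heval : ∀ (h : X →L[𝕜] 𝕜) (y : Y),
        ∑ p, c p * (h (xnorm p) * g p y) = 0 := by
      intro h y
      have h1 := congrArg (fun φ : StrongDual 𝕜 (X →L[𝕜] Y) => φ (h.smulRight y)) hc
      simp only [ContinuousLinearMap.sum_apply, ContinuousLinearMap.smul_apply,
        ContinuousLinearMap.zero_apply] at h1
      rw [← h1]
      refine Finset.sum_congr rfl ?_
      intro p _
      rw [hFapply]
      simp only [ContinuousLinearMap.smulRight_apply, map_smul, smul_eq_mul]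
      try ring
    -- hence a vector identity
    have hvec : ∀ y : Y, ∑ p, (c p * g p y) • xnorm p = 0 := by
      intro y
      apply NormedSpace.eq_zero_of_forall_dual_eq_zero 𝕜
      intro h
      rw [map_sum]
      rw [show (0:𝕜) = ∑ p, c p * (h (xnorm p) * g p y) from (heval h y).symm]
      refine Finset.sum_congr rfl ?_
      intro p _
      rw [map_smul, smul_eq_mul]
      ring
    -- expand in the basis x
    have hcoef : ∀ (k : Fin d) (y : Y),
        ∑ p, c p * g p y * νk p * bc p k = 0 := by
      intro k y
      have h1 : ∑ p, (c p * g p y) • xnorm p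
          = ∑ k', (∑ p, c p * g p y * νk p * bc p k') • x k' := by
        calc ∑ p, (c p * g p y) • xnorm p
            = ∑ p, ∑ k', (c p * g p y * νk p * bc p k') • x k' := by
              refine Finset.sum_congr rfl ?_
              intro p _
              rw [hxnormdef]
              simp only
              rw [smul_smul, hxsplit p, Finset.smul_sum]
              refine Finset.sum_congr rfl ?_
              intro k' _
              rw [smul_smul]
              try ring_nf
          _ = ∑ k', ∑ p, (c p * g p y * νk p * bc p k') • x k' := Finset.sum_comm
          _ = ∑ k', (∑ p, c p * g p y * νk p * bc p k') • x k' := by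
              refine Finset.sum_congr rfl ?_
              intro k' _
              rw [Finset.sum_smul]
      have h2 : ∑ k', (∑ p, c p * g p y * νk p * bc p k') • x k' = 0 := by
        rw [← h1, hvec y]
      exact Fintype.linearIndependent_iff.mp hxind _ h2 k
    -- off-diagonal coefficients vanish
    have step1 : ∀ q : ι, q.1.1 ≠ q.1.2 → c q = 0 := by
      intro q hq
      have h1 := hcoef q.1.1 (u q.1.2)
      have hlt : q.1.1 < q.1.2 := lt_of_le_of_ne q.2 hq
      rw [Finset.sum_eq_single q] at h1
      · have hg : g q (u q.1.2) ≠ 0 := (hgne q hq).2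
        have hb : bc q q.1.1 = 1 := by
          simp only [hbc]
          simp [Ne.symm hq]
        rw [hb, mul_one] at h1
        have := mul_eq_zero.mp h1
        rcases this with h' | h'
        · rcases mul_eq_zero.mp h' with h'' | h''
          · exact h''
          · exact absurd h'' hg
        · exact absurd h' (hνkne q)
      · intro p _ hpq
        by_cases hb : bc p q.1.1 = 0
        · rw [hb, mul_zero]
        · by_cases hgz : g p (u q.1.2) = 0
          · rw [hgz]; ring
          · exfalso
            -- q.1.1 ∈ {p.1.1, p.1.2} and q.1.2 ∈ {p.1.1, p.1.2}
            have hk : q.1.1 = p.1.1 ∨ q.1.1 = p.1.2 := by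
              by_contra hcon
              push_neg at hcon
              apply hb
              simp only [hbc]
              rw [if_neg (Ne.symm hcon.1), if_neg (Ne.symm hcon.2), add_zero]
            have hm : q.1.2 = p.1.1 ∨ q.1.2 = p.1.2 := by
              by_contra hcon
              push_neg at hcon
              exact hgz (hgzero p q.1.2 hcon.1 hcon.2)
            rcases hk with hk | hk <;> rcases hm with hm | hm
            · exact hq (hk.trans hm.symm)
            · apply hpq
              apply Subtype.ext
              exact Prod.ext hk.symm hm.symm
            · -- q.1.1 = p.1.2, q.1.2 = p.1.1 : contradicts order
              have := p.2
              rw [← hm, ← hk] at this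
              exact absurd this (not_le.mpr hlt)
            · exact hq (hk.trans hm.symm)
      · intro hq'
        exact absurd (Finset.mem_univ q) hq'
    -- all coefficients vanish
    intro q
    rcases ne_or_eq q.1.1 q.1.2 with hq | hq
    · exact step1 q hq
    · have h1 := hcoef q.1.1 (u q.1.1)
      rw [Finset.sum_eq_single q] at h1
      · have hg : g q (u q.1.1) = 1 := hgdiag q hq
        have hb : bc q q.1.1 = 2 := by
          simp only [hbc]
          simp [hq.symm]
          try norm_num
        rw [hg, hb, mul_one] at h1
        have h2 : νk q * 2 ≠ 0 := mul_ne_zero (hνkne q) two_ne_zero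
        rcases mul_eq_zero.mp h1 with h' | h'
        · rcases mul_eq_zero.mp h' with h'' | h''
          · exact h''
          · exact absurd h'' (hνkne q)
        · exact absurd h' two_ne_zero
      · intro p _ hpq
        rcases ne_or_eq p.1.1 p.1.2 with hp | hp
        · rw [step1 p hp]; ring
        · -- p diagonal, p ≠ q, so p.1.1 ≠ q.1.1
          have hne : p.1.1 ≠ q.1.1 := by
            intro he
            apply hpq
            apply Subtype.ext
            apply Prod.ext he (by rw [← hp, ← hq] at *; exact he)
          have hb : bc p q.1.1 = 0 := by
            simp only [hbc]
            rw [if_neg hne, if_neg (by rw [← hp]; exact hne), add_zero]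
          rw [hb, mul_zero]
      · intro hq'
        exact absurd (Finset.mem_univ q) hq'
  -- d = n
  have hinj : Function.Injective ((T : X →ₗ[𝕜] Y).comp X₀.subtype) := by
    intro a b hab
    have h1 : T ((a : X) - (b : X)) = 0 := by
      simp only [LinearMap.comp_apply, Submodule.subtype_apply] at hab
      rw [map_sub, sub_eq_zero]
      exact hab
    have h2 : ‖(a : X) - (b : X)‖ = 0 := by
      rw [← hiso _ (X₀.sub_mem a.2 b.2), h1, norm_zero]
    have := norm_eq_zero.mp h2
    exact Subtype.ext (sub_eq_zero.mp this)
  have hrange : LinearMap.range ((T : X →ₗ[𝕜] Y).comp X₀.subtype) = X₀.map (T : X →ₗ[𝕜] Y) := by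
    rw [LinearMap.range_comp, Submodule.range_subtype]
  have hfinmap : Module.finrank 𝕜 ↥(X₀.map (T : X →ₗ[𝕜] Y)) = n := by
    rw [← hdim]
    rw [← hrange]
    exact (LinearEquiv.finrank_eq (LinearEquiv.ofInjective _ hinj)).symm
  have hdn : d = n := by
    have h1 : Module.finrank 𝕜 ↥(Submodule.span 𝕜 (Set.range u)) = d := by
      rw [finrank_span_eq_card huind, Fintype.card_fin]
    rw [huspan, hfinmap] at h1
    exact h1.symm
  -- cardinality of the index type
  have hcard : Fintype.card ι = (n + 1).choose 2 := by
    have h1 : Fintype.card ι = Fintype.card (Sym2 (Fin d)) :=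
      (Fintype.card_congr Sym2.sortEquiv).symm
    rw [h1, Sym2.card, Fintype.card_fin, hdn]
  -- conclude
  set N := Submodule.span 𝕜 (suppFunctionals 𝕜 T) with hN
  set Fsub : ι → N := fun p => ⟨F p, Submodule.subset_span (hFmem p)⟩ with hFsub
  have hFsubind : LinearIndependent 𝕜 Fsub := by
    apply LinearIndependent.of_comp N.subtype
    have : N.subtype ∘ Fsub = F := rfl
    rw [this]
    exact hFind
  have hle := hFsubind.cardinal_lift_le_rank
  rw [Cardinal.mk_fintype, hcard] at hle
  simpa using hle
end
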